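/- arXiv:2604.27034 — 10 statements merged into one kernel-verified Lean document; each statement's English description precedes it below -/
import Mathlib

section
/- Let W be a Hermitian complex matrix indexed by Fin m × Fin n. Then there exists a finite family of complex m×n matrices B_1, …, B_k such that p_W(x,y) = ∑_{s=1}^k | ∑_{i,k} conj(x_i) (B_s)_{i,k} y_k |² for all x ∈ ℂ^m and y ∈ ℂ^n, if and only if the partial transpose W^Γ is positive semidefinite. -/
open Matrix
open scoped ComplexOrder

/-- Kronecker product vector: `(x ⊗ y)_{(i,k)} = x i * y k`. -/
noncomputable def kron {m n : ℕ} (x : Fin m → ℂ) (y : Fin n → ℂ) : Fin m × Fin n → ℂ :=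
  fun ik => x ik.1 * y ik.2

/-- The biquadratic form `p_W(x,y) = (x⊗y)ᴴ W (x⊗y)`. -/
noncomputable def bqf {m n : ℕ} (W : Matrix (Fin m × Fin n) (Fin m × Fin n) ℂ)
    (x : Fin m → ℂ) (y : Fin n → ℂ) : ℂ :=
  star (kron x y) ⬝ᵥ (W *ᵥ kron x y)

/-- Partial transpose (on the second factor): `(W^Γ)_{(i,k),(j,l)} = W_{(i,l),(j,k)}`. -/
noncomputable def pt {m n : ℕ} (W : Matrix (Fin m × Fin n) (Fin m × Fin n) ℂ) :
    Matrix (Fin m × Fin n) (Fin m × Fin n) ℂ :=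
  Matrix.of fun p q => W (p.1, q.2) (q.1, p.2)

lemma quad_expand {p : Type*} [Fintype p] (A : Matrix p p ℂ) (z : p → ℂ) :
    star z ⬝ᵥ (A *ᵥ z) = ∑ i, ∑ j, (starRingEnd ℂ) (z i) * A i j * z j := by
  simp only [dotProduct, mulVec, Finset.mul_sum, Pi.star_apply]
  exact Finset.sum_congr rfl fun i _ => Finset.sum_congr rfl fun j _ => by
    rw [starRingEnd_apply, mul_assoc]

lemma quad_eq_zero {p : Type*} [Fintype p] [DecidableEq p] (D : Matrix p p ℂ)
    (h : ∀ z : p → ℂ, star z ⬝ᵥ (D *ᵥ z) = 0) : D = 0 := by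
  have h2 : ∀ z : EuclideanSpace ℂ p, inner ℂ ((Matrix.toEuclideanLin D) z) z = (0 : ℂ) := by
    intro z
    rw [EuclideanSpace.inner_eq_star_dotProduct]
    have h3 := h (WithLp.ofLp z)
    rw [Matrix.ofLp_toEuclideanLin_apply, dotProduct_comm, star_dotProduct, h3, star_zero]
  have := (inner_map_self_eq_zero (Matrix.toEuclideanLin D)).mp h2
  exact (LinearEquiv.map_eq_zero_iff Matrix.toEuclideanLin).mp this

lemma kron_quad_zero {m n : ℕ} (D : Matrix (Fin m × Fin n) (Fin m × Fin n) ℂ)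
    (h : ∀ (a : Fin m → ℂ) (b : Fin n → ℂ), star (kron a b) ⬝ᵥ (D *ᵥ kron a b) = 0) :
    D = 0 := by
  have hM : ∀ b : Fin n → ℂ,
      (Matrix.of fun i j => ∑ k, ∑ l, (starRingEnd ℂ) (b k) * D (i, k) (j, l) * b l
        : Matrix (Fin m) (Fin m) ℂ) = 0 := by
    intro b
    apply quad_eq_zero
    intro a
    rw [quad_expand, ← h a b, quad_expand]
    simp only [Fintype.sum_prod_type, Matrix.of_apply, Finset.mul_sum, Finset.sum_mul]
    refine Finset.sum_congr rfl fun i _ => ?_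
    rw [Finset.sum_comm]
    refine Finset.sum_congr rfl fun k _ => Finset.sum_congr rfl fun j _ =>
      Finset.sum_congr rfl fun l _ => ?_
    simp only [kron, _root_.map_mul]
    ring
  ext ⟨i, k⟩ ⟨j, l⟩
  have hN : (Matrix.of fun k l => D (i, k) (j, l) : Matrix (Fin n) (Fin n) ℂ) = 0 := by
    apply quad_eq_zero
    intro b
    rw [quad_expand]
    have := congrFun (congrFun (hM b) i) j
    simpa using this
  simpa using congrFun (congrFun hN k) l

lemma quad_pt {m n : ℕ} (A : Matrix (Fin m × Fin n) (Fin m × Fin n) ℂ)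
    (x : Fin m → ℂ) (y : Fin n → ℂ) :
    star (kron x (star y)) ⬝ᵥ (pt A *ᵥ kron x (star y)) = bqf A x y := by
  rw [quad_expand, bqf, quad_expand]
  simp only [Fintype.sum_prod_type]
  refine Finset.sum_congr rfl fun i _ => ?_
  rw [Finset.sum_comm]
  refine Eq.trans (Finset.sum_congr rfl fun j _ => Finset.sum_comm) ?_
  rw [Finset.sum_comm]
  refine Finset.sum_congr rfl fun k _ => Finset.sum_congr rfl fun j _ =>
    Finset.sum_congr rfl fun l _ => ?_
  simp only [kron, pt, Matrix.of_apply, Pi.star_apply, _root_.map_mul, Complex.conj_conj,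
    RCLike.star_def]
  ring

lemma quad_CC {κ p : Type*} [Fintype κ] [Fintype p] (C : Matrix κ p ℂ) (z : p → ℂ) :
    star z ⬝ᵥ ((Cᴴ * C) *ᵥ z) =
      ((∑ s, ‖∑ q, C s q * z q‖ ^ 2 : ℝ) : ℂ) := by
  rw [← Matrix.mulVec_mulVec, Matrix.dotProduct_mulVec, ← Matrix.star_mulVec]
  push_cast
  rw [dotProduct]
  refine Finset.sum_congr rfl fun s _ => ?_
  have hws : (C *ᵥ z) s = ∑ q, C s q * z q := rfl
  rw [Pi.star_apply, hws, ← Complex.ofReal_pow, Complex.sq_norm,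
    Complex.normSq_eq_conj_mul_self]
  rfl

lemma row_conj {m n : ℕ} (c : Fin m × Fin n → ℂ) (x : Fin m → ℂ) (y : Fin n → ℂ) :
    ∑ i, ∑ j, (starRingEnd ℂ) (x i) * star (c (i, j)) * y j
      = star (∑ q, c q * kron x (star y) q) := by
  rw [Fintype.sum_prod_type, star_sum]
  refine Finset.sum_congr rfl fun i _ => ?_
  rw [star_sum]
  refine Finset.sum_congr rfl fun j _ => ?_
  simp only [kron, star_mul', star_star, Pi.star_apply, RCLike.star_def, Complex.conj_conj]
  ring

lemma abs_inner_row {m n : ℕ} (c : Fin m × Fin n → ℂ) (x : Fin m → ℂ) (y : Fin n → ℂ) :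
    ‖∑ i, ∑ j, (starRingEnd ℂ) (x i) * star (c (i, j)) * y j‖
      = ‖∑ q, c q * kron x (star y) q‖ := by
  rw [row_conj, RCLike.star_def, Complex.norm_conj]

theorem stmt_2 (m n : ℕ) (W : Matrix (Fin m × Fin n) (Fin m × Fin n) ℂ)
    (hW : W.IsHermitian) :
    (∃ (k : ℕ) (B : Fin k → Matrix (Fin m) (Fin n) ℂ),
      ∀ (x : Fin m → ℂ) (y : Fin n → ℂ),
        bqf W x y =
          ((∑ s : Fin k,
              ‖∑ i : Fin m, ∑ j : Fin n,
                (starRingEnd ℂ) (x i) * B s i j * y j‖ ^ 2 : ℝ) : ℂ))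
    ↔ (pt W).PosSemidef := by
  constructor
  · rintro ⟨k, B, hB⟩
    set C : Matrix (Fin k) (Fin m × Fin n) ℂ := Matrix.of fun s p => star (B s p.1 p.2) with hCdef
    have key : pt W = Cᴴ * C := by
      have hz : ∀ (a : Fin m → ℂ) (b : Fin n → ℂ),
          star (kron a b) ⬝ᵥ ((pt W - Cᴴ * C) *ᵥ kron a b) = 0 := by
        intro a b
        rw [Matrix.sub_mulVec, dotProduct_sub, sub_eq_zero]
        have h1 : star (kron a b) ⬝ᵥ (pt W *ᵥ kron a b) = bqf W a (star b) := by
          have := quad_pt W a (star b)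
          rwa [star_star] at this
        rw [h1, quad_CC, hB a (star b)]
        congr 1
        refine Finset.sum_congr rfl fun s _ => ?_
        congr 1
        have habs := abs_inner_row (fun p => C s p) a (star b)
        rw [star_star] at habs
        rw [← habs]
        congr 1
        refine Finset.sum_congr rfl fun i _ => Finset.sum_congr rfl fun j _ => ?_
        simp [hCdef]
      have hD := kron_quad_zero _ hz
      exact sub_eq_zero.mp hD
    rw [key]
    exact Matrix.posSemidef_conjTranspose_mul_self C
  · intro h
    obtain ⟨C, hC⟩ := by
      open scoped MatrixOrder Matrix.Norms.L2Operator in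
      exact CStarAlgebra.nonneg_iff_eq_star_mul_self.mp h.nonneg
    rw [Matrix.star_eq_conjTranspose] at hC
    refine ⟨m * n, fun s => Matrix.of fun i j => star (C (finProdFinEquiv.symm s) (i, j)),
      fun x y => ?_⟩
    rw [← quad_pt W x y, hC, quad_CC]
    congr 1
    refine Fintype.sum_equiv finProdFinEquiv
      (fun p => ‖∑ q, C p q * kron x (star y) q‖ ^ 2) _ fun p => ?_
    simp only [Equiv.symm_apply_apply, Matrix.of_apply]
    congr 1
    exact (abs_inner_row (fun q => C p q) x y).symm
end

section
/- Let W be a Hermitian complex matrix indexed by Fin m × Fin n. Then the following are equivalent: (a) there exist finite families of complex m×n matrices A_1,…,A_k and B_1,…,B_l such that p_W(x,y) = ∑_r |xᵗ A_r y|² + ∑_s |xᴴ B_s y|² for all x ∈ ℂ^m, y ∈ ℂ^n (i.e., the form p_W is decomposable); (b) there exist positive semidefinite matrices Q and R indexed by Fin m × Fin n with W = Q + R^Γ. -/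
open Matrix
open scoped ComplexOrder

/-- Polarization: a complex matrix with vanishing quadratic form is zero. -/
lemma quad_zero {ι : Type*} [Fintype ι] [DecidableEq ι] (N : Matrix ι ι ℂ)
    (h : ∀ x : ι → ℂ, star x ⬝ᵥ (N *ᵥ x) = 0) : N = 0 := by
  have key : ∀ u v : ι → ℂ, star u ⬝ᵥ (N *ᵥ v) = 0 := by
    have expand : ∀ (c : ℂ) (u v : ι → ℂ),
        star (u + c • v) ⬝ᵥ (N *ᵥ (u + c • v)) =
          c * (star u ⬝ᵥ (N *ᵥ v)) + (starRingEnd ℂ) c * (star v ⬝ᵥ (N *ᵥ u)) := by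
      intro c u v
      simp [mulVec_add, star_add, add_dotProduct, dotProduct_add, mulVec_smul,
        dotProduct_smul, star_smul, smul_dotProduct, h, smul_eq_mul]
      ring
    intro u v
    have h1 := expand 1 u v
    have h2 := expand Complex.I u v
    rw [h (u + (1:ℂ) • v)] at h1
    rw [h (u + Complex.I • v)] at h2
    simp [Complex.conj_I] at h1 h2
    -- h1 : B u v + B v u = 0 ; h2 : I*(Buv) - I*(Bvu) = 0
    linear_combination (-(1:ℂ)/2) * h1 + (Complex.I/2) * h2 + ((star u ⬝ᵥ (N *ᵥ v) - star v ⬝ᵥ (N *ᵥ u))/2) * Complex.I_sq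
  ext i j
  have := key (Pi.single i 1) (Pi.single j 1)
  simpa [dotProduct, mulVec, Pi.single_apply, Finset.sum_ite_eq'] using this

lemma conj_mul_self' (w : ℂ) : (starRingEnd ℂ) w * w = ((‖w‖ ^ 2 : ℝ) : ℂ) := by
  rw [mul_comm, Complex.mul_conj, Complex.sq_norm]

lemma bqf_add {m n : ℕ} (P Q : Matrix (Fin m × Fin n) (Fin m × Fin n) ℂ) (x y) :
    bqf (P + Q) x y = bqf P x y + bqf Q x y := by
  simp [bqf, add_mulVec, dotProduct_add]

lemma bqf_sub {m n : ℕ} (P Q : Matrix (Fin m × Fin n) (Fin m × Fin n) ℂ) (x y) :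
    bqf (P - Q) x y = bqf P x y - bqf Q x y := by
  simp [bqf, sub_mulVec, dotProduct_sub]

lemma mulVec_kron {m n : ℕ} {ι : Type*} [Fintype ι] (C : Matrix ι (Fin m × Fin n) ℂ)
    (x : Fin m → ℂ) (y : Fin n → ℂ) (r : ι) :
    (C *ᵥ kron x y) r = ∑ i, ∑ j, x i * C r (i, j) * y j := by
  simp only [mulVec, dotProduct, kron, Fintype.sum_prod_type]
  exact Finset.sum_congr rfl fun i _ => Finset.sum_congr rfl fun j _ => by ring

lemma bqf_ctms {m n : ℕ} {ι : Type*} [Fintype ι] (C : Matrix ι (Fin m × Fin n) ℂ)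
    (x : Fin m → ℂ) (y : Fin n → ℂ) :
    bqf (Cᴴ * C) x y = ∑ r : ι,
      ((‖∑ i, ∑ j, x i * C r (i, j) * y j‖ ^ 2 : ℝ) : ℂ) := by
  have : bqf (Cᴴ * C) x y = star (C *ᵥ kron x y) ⬝ᵥ (C *ᵥ kron x y) := by
    rw [bqf, ← mulVec_mulVec, dotProduct_mulVec, ← star_mulVec]
  rw [this, dotProduct]
  refine Finset.sum_congr rfl fun r _ => ?_
  rw [Pi.star_apply, RCLike.star_def, conj_mul_self', mulVec_kron]

def swapEquiv {m n : ℕ} : ((Fin m × Fin n) × (Fin m × Fin n)) ≃ ((Fin m × Fin n) × (Fin m × Fin n)) where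
  toFun t := ((t.1.1, t.2.2), (t.2.1, t.1.2))
  invFun t := ((t.1.1, t.2.2), (t.2.1, t.1.2))
  left_inv := fun ⟨⟨a,b⟩,⟨c,d⟩⟩ => rfl
  right_inv := fun ⟨⟨a,b⟩,⟨c,d⟩⟩ => rfl

lemma bqf_pt' {m n : ℕ} (R : Matrix (Fin m × Fin n) (Fin m × Fin n) ℂ)
    (x : Fin m → ℂ) (y : Fin n → ℂ) :
    bqf (pt R) x y = star (kron x (star y)) ⬝ᵥ (R *ᵥ kron x (star y)) := by
  have key : ∀ (M : Matrix (Fin m × Fin n) (Fin m × Fin n) ℂ) (v : Fin m × Fin n → ℂ),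
      star v ⬝ᵥ (M *ᵥ v) = ∑ t : (Fin m × Fin n) × (Fin m × Fin n),
        (starRingEnd ℂ) (v t.1) * M t.1 t.2 * v t.2 := by
    intro M v
    rw [Fintype.sum_prod_type]
    simp only [dotProduct, mulVec, Pi.star_apply, RCLike.star_def, Finset.mul_sum]
    exact Finset.sum_congr rfl fun p _ => Finset.sum_congr rfl fun q _ => by ring
  rw [bqf, key, key]
  refine Fintype.sum_equiv (swapEquiv (m := m) (n := n)) _ _ fun t => ?_
  simp only [pt, kron, swapEquiv, Pi.star_apply, Matrix.of_apply, Equiv.coe_fn_mk,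
    RCLike.star_def, _root_.map_mul, Complex.conj_conj]
  ring

lemma bqf_eq_quad {m n : ℕ} (M : Matrix (Fin m × Fin n) (Fin m × Fin n) ℂ)
    (x : Fin m → ℂ) (y : Fin n → ℂ) :
    bqf M x y = star x ⬝ᵥ ((Matrix.of fun i j : Fin m =>
      ∑ k, ∑ l, (starRingEnd ℂ) (y k) * M (i, k) (j, l) * y l) *ᵥ x) := by
  simp only [bqf, dotProduct, mulVec, kron, Pi.star_apply, RCLike.star_def,
    Matrix.of_apply, Fintype.sum_prod_type, Finset.mul_sum, Finset.sum_mul, _root_.map_mul]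
  refine Finset.sum_congr rfl fun i _ => ?_
  rw [Finset.sum_comm]
  refine Finset.sum_congr rfl fun j _ => Finset.sum_congr rfl fun k _ =>
    Finset.sum_congr rfl fun l _ => by ring

lemma bqf_inj {m n : ℕ} (M : Matrix (Fin m × Fin n) (Fin m × Fin n) ℂ)
    (h : ∀ x y, bqf M x y = 0) : M = 0 := by
  have step1 : ∀ (y : Fin n → ℂ) (i j : Fin m),
      (∑ k, ∑ l, (starRingEnd ℂ) (y k) * M (i, k) (j, l) * y l) = 0 := by
    intro y i j
    have h0 := quad_zero (Matrix.of fun i j : Fin m =>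
      ∑ k, ∑ l, (starRingEnd ℂ) (y k) * M (i, k) (j, l) * y l)
      (fun x => by rw [← bqf_eq_quad, h])
    exact congrFun (congrFun h0 i) j
  have step2 : ∀ (i j : Fin m) (k l : Fin n), M (i, k) (j, l) = 0 := by
    intro i j k l
    have h0 := quad_zero (Matrix.of fun k l : Fin n => M (i, k) (j, l)) (fun y => by
      rw [← step1 y i j]
      simp only [dotProduct, mulVec, Matrix.of_apply, Pi.star_apply, RCLike.star_def,
        Finset.mul_sum]
      exact Finset.sum_congr rfl fun k _ => Finset.sum_congr rfl fun l _ => by ring)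
    exact congrFun (congrFun h0 k) l
  ext ⟨i, k⟩ ⟨j, l⟩
  exact step2 i j k l

lemma bqf_pt_star {m n : ℕ} (R : Matrix (Fin m × Fin n) (Fin m × Fin n) ℂ)
    (x : Fin m → ℂ) (y : Fin n → ℂ) :
    bqf (pt R) x y = bqf R x (star y) := bqf_pt' R x y

theorem stmt_3 (m n : ℕ) (W : Matrix (Fin m × Fin n) (Fin m × Fin n) ℂ)
    (hW : W.IsHermitian) :
    (∃ (k l : ℕ) (A : Fin k → Matrix (Fin m) (Fin n) ℂ)
        (B : Fin l → Matrix (Fin m) (Fin n) ℂ),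
      ∀ (x : Fin m → ℂ) (y : Fin n → ℂ),
        bqf W x y =
          (((∑ r : Fin k, ‖∑ i : Fin m, ∑ j : Fin n, x i * A r i j * y j‖ ^ 2)
            + ∑ s : Fin l,
                ‖∑ i : Fin m, ∑ j : Fin n,
                  (starRingEnd ℂ) (x i) * B s i j * y j‖ ^ 2 : ℝ) : ℂ))
    ↔ (∃ Q R : Matrix (Fin m × Fin n) (Fin m × Fin n) ℂ,
        Q.PosSemidef ∧ R.PosSemidef ∧ W = Q + pt R) := by
  constructor
  · rintro ⟨k, l, A, B, h⟩
    set MA : Matrix (Fin k) (Fin m × Fin n) ℂ := Matrix.of fun r p => A r p.1 p.2 with hMA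
    set MB : Matrix (Fin l) (Fin m × Fin n) ℂ :=
      Matrix.of fun s p => (starRingEnd ℂ) (B s p.1 p.2) with hMB
    refine ⟨MAᴴ * MA, MBᴴ * MB, posSemidef_conjTranspose_mul_self _,
      posSemidef_conjTranspose_mul_self _, ?_⟩
    have key : ∀ x y, bqf (W - (MAᴴ * MA + pt (MBᴴ * MB))) x y = 0 := by
      intro x y
      rw [bqf_sub, bqf_add, bqf_pt_star, bqf_ctms, bqf_ctms, h x y]
      have e1 : ∀ r : Fin k, (∑ i, ∑ j, x i * MA r (i, j) * y j)
          = ∑ i, ∑ j, x i * A r i j * y j := fun r => rfl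
      have e2 : ∀ s : Fin l, ‖∑ i, ∑ j, x i * MB s (i, j) * (star y) j‖
          = ‖∑ i, ∑ j, (starRingEnd ℂ) (x i) * B s i j * y j‖ := by
        intro s
        rw [← Complex.norm_conj]
        congr 1
        simp only [map_sum, _root_.map_mul, Complex.conj_conj, hMB, Matrix.of_apply,
          Pi.star_apply, RCLike.star_def]
      simp only [e1, e2]
      push_cast
      ring
    have := bqf_inj _ key
    rw [sub_eq_zero] at this
    exact this
  · rintro ⟨Q, R, hQ, hR, hW'⟩
    obtain ⟨C, hC⟩ : ∃ C : Matrix (Fin m × Fin n) (Fin m × Fin n) ℂ, Q = Cᴴ * C := by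
      open scoped MatrixOrder in
      obtain ⟨E, hE⟩ := CStarAlgebra.nonneg_iff_eq_star_mul_self.mp hQ.nonneg
      exact ⟨E, by rw [hE, star_eq_conjTranspose]⟩
    obtain ⟨D, hD⟩ : ∃ D : Matrix (Fin m × Fin n) (Fin m × Fin n) ℂ, R = Dᴴ * D := by
      open scoped MatrixOrder in
      obtain ⟨E, hE⟩ := CStarAlgebra.nonneg_iff_eq_star_mul_self.mp hR.nonneg
      exact ⟨E, by rw [hE, star_eq_conjTranspose]⟩
    refine ⟨m * n, m * n,
      fun r => Matrix.of fun i j => C (finProdFinEquiv.symm r) (i, j),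
      fun s => Matrix.of fun i j => (starRingEnd ℂ) (D (finProdFinEquiv.symm s) (i, j)),
      fun x y => ?_⟩
    rw [hW', bqf_add, bqf_pt_star, hC, hD, bqf_ctms, bqf_ctms]
    have e1 : (∑ r : Fin (m * n), ‖∑ i, ∑ j,
          x i * C (finProdFinEquiv.symm r) (i, j) * y j‖ ^ 2)
        = ∑ p : Fin m × Fin n, ‖∑ i, ∑ j, x i * C p (i, j) * y j‖ ^ 2 := by
      exact Equiv.sum_comp finProdFinEquiv.symm
        (fun p => ‖∑ i, ∑ j, x i * C p (i, j) * y j‖ ^ 2)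
    have e2 : (∑ s : Fin (m * n), ‖∑ i, ∑ j,
          (starRingEnd ℂ) (x i) * (starRingEnd ℂ) (D (finProdFinEquiv.symm s) (i, j)) * y j‖ ^ 2)
        = ∑ p : Fin m × Fin n, ‖∑ i, ∑ j, x i * D p (i, j) * (star y) j‖ ^ 2 := by
      rw [Equiv.sum_comp finProdFinEquiv.symm
        (fun p => ‖∑ i, ∑ j,
          (starRingEnd ℂ) (x i) * (starRingEnd ℂ) (D p (i, j)) * y j‖ ^ 2)]
      refine Finset.sum_congr rfl fun p _ => ?_
      rw [← Complex.norm_conj]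
      congr 1
      simp only [map_sum, _root_.map_mul, Complex.conj_conj, Pi.star_apply, RCLike.star_def]
    simp only [Matrix.of_apply] at *
    rw [e1, e2]
    push_cast
    ring
end

section
/- Let X be a Hermitian complex matrix indexed by Fin m × Fin n. Then the trace Tr(X·(Q + R^Γ)) is a nonnegative real number for every pair of positive semidefinite matrices Q, R indexed by Fin m × Fin n, if and only if both X and X^Γ are positive semidefinite. -/
open Matrix
open scoped ComplexOrder

open Matrix
open scoped ComplexOrder

variable {m n : ℕ}

lemma psd_trace_nonneg {k : Type*} [Fintype k] [DecidableEq k]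
    (M : Matrix k k ℂ) (hM : M.PosSemidef) : 0 ≤ M.trace := by
  rw [Matrix.trace]
  apply Finset.sum_nonneg
  intro i _
  have := hM.dotProduct_mulVec_nonneg (Pi.single i 1)
  simpa [Matrix.mulVec_single, dotProduct, Pi.single_apply] using this

lemma trace_mul_psd_nonneg {k : Type*} [Fintype k] [DecidableEq k]
    (A B : Matrix k k ℂ) (hA : A.PosSemidef) (hB : B.PosSemidef) :
    0 ≤ (A * B).trace := by
  obtain ⟨C, rfl⟩ : ∃ C : Matrix k k ℂ, A = Cᴴ * C := by
    open scoped MatrixOrder in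
    obtain ⟨B, rfl⟩ := CStarAlgebra.nonneg_iff_eq_star_mul_self.mp hA.nonneg
    exact ⟨B, rfl⟩
  rw [Matrix.mul_assoc, Matrix.trace_mul_comm]
  exact psd_trace_nonneg _ ((hB.mul_mul_conjTranspose_same C))

lemma trace_pt_swap (X R : Matrix (Fin m × Fin n) (Fin m × Fin n) ℂ) :
    (X * pt R).trace = (pt X * R).trace := by
  simp only [Matrix.trace, Matrix.diag, Matrix.mul_apply, pt, Matrix.of_apply]
  rw [← Finset.sum_product', ← Finset.sum_product']
  refine Finset.sum_nbij' (fun p => (((p.1.1, p.2.2), (p.2.1, p.1.2)))) (fun p => (((p.1.1, p.2.2), (p.2.1, p.1.2)))) ?_ ?_ ?_ ?_ ?_ <;> simp [mul_comm]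

lemma trace_rankOne (X : Matrix (Fin m × Fin n) (Fin m × Fin n) ℂ)
    (v : Fin m × Fin n → ℂ) :
    (X * vecMulVec v (star v)).trace = star v ⬝ᵥ (X *ᵥ v) := by
  simp only [Matrix.trace, Matrix.diag, Matrix.mul_apply, vecMulVec_apply, dotProduct,
    mulVec, Pi.star_apply]
  simp [dotProduct, Finset.mul_sum]
  ring_nf
  congr 1; ext i; congr 1; ext j; ring

lemma psd_vecMulVec (v : Fin m × Fin n → ℂ) : (vecMulVec v (star v)).PosSemidef := by
  refine posSemidef_iff_dotProduct_mulVec.mpr ⟨?_, ?_⟩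
  · ext p q; simp [vecMulVec_apply, conjTranspose_apply, mul_comm]
  · intro x
    have : star x ⬝ᵥ (vecMulVec v (star v) *ᵥ x) = (star x ⬝ᵥ v) * star (star x ⬝ᵥ v) := by
      simp [dotProduct, mulVec, vecMulVec_apply, Finset.sum_mul, Finset.mul_sum]
      rw [Finset.sum_comm]
      ring_nf
      congr 1; ext i; congr 1; ext j; ring
    rw [this]
    exact mul_star_self_nonneg _

lemma pt_hermitian (X : Matrix (Fin m × Fin n) (Fin m × Fin n) ℂ) (hX : X.IsHermitian) :
    (pt X).IsHermitian := by
  ext p q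
  simp only [conjTranspose_apply, pt, Matrix.of_apply]
  have := congrFun (congrFun hX (p.1, q.2)) (q.1, p.2)
  simpa [conjTranspose_apply] using this

lemma pt_zero : pt (0 : Matrix (Fin m × Fin n) (Fin m × Fin n) ℂ) = 0 := by
  ext p q; simp [pt]

theorem stmt_5 (m n : ℕ) (X : Matrix (Fin m × Fin n) (Fin m × Fin n) ℂ)
    (hX : X.IsHermitian) :
    (∀ Q R : Matrix (Fin m × Fin n) (Fin m × Fin n) ℂ,
      Q.PosSemidef → R.PosSemidef → 0 ≤ (X * (Q + pt R)).trace)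
    ↔ X.PosSemidef ∧ (pt X).PosSemidef := by
  constructor
  · intro h
    constructor
    · refine .of_dotProduct_mulVec_nonneg hX fun v => ?_
      have := h (vecMulVec v (star v)) 0 (psd_vecMulVec v) Matrix.PosSemidef.zero
      rwa [pt_zero, add_zero, trace_rankOne] at this
    · refine .of_dotProduct_mulVec_nonneg (pt_hermitian X hX) fun v => ?_
      have := h 0 (vecMulVec v (star v)) Matrix.PosSemidef.zero (psd_vecMulVec v)
      rwa [zero_add, trace_pt_swap, trace_rankOne] at this
  · rintro ⟨h1, h2⟩ Q R hQ hR
    rw [Matrix.mul_add, Matrix.trace_add, trace_pt_swap]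
    exact add_nonneg (trace_mul_psd_nonneg _ _ h1 hQ) (trace_mul_psd_nonneg _ _ h2 hR)
end

section
/- Let Π be a complex matrix indexed by Fin m × Fin n such that: Π is an orthogonal projection (Π = Πᴴ and Π² = Π) with Π ≠ I; the partial transpose Π^Γ is positive semidefinite and I − Π^Γ is positive semidefinite; and there exist no nonzero x ∈ ℂ^m, y ∈ ℂ^n with (x⊗y)ᴴ Π (x⊗y) = 0. Let δ = min over ‖x‖ = ‖y‖ = 1 of (x⊗y)ᴴ Π (x⊗y). Then δ > 0, and for every ε with 0 < ε < δ: (a) (x⊗y)ᴴ (Π − ε·I) (x⊗y) ≥ 0 for all x ∈ ℂ^m, y ∈ ℂ^n; and (b) there do not exist positive semidefinite matrices Q and R with Π − ε·I = Q + R^Γ (i.e., the form associated to Π − ε·I is indecomposable). -/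
open Matrix
open scoped ComplexOrder

lemma trace_conjT_mul_self_nonneg' {k : Type*} [Fintype k] (Z : Matrix k k ℂ) :
    0 ≤ (Zᴴ * Z).trace := by
  rw [Matrix.trace]
  refine Finset.sum_nonneg fun j _ => ?_
  simp only [Matrix.diag, Matrix.mul_apply, Matrix.conjTranspose_apply]
  exact Finset.sum_nonneg fun i _ => star_mul_self_nonneg _

open scoped MatrixOrder in
lemma psd_eq_conjT_mul_self' {k : Type*} [Fintype k] [DecidableEq k]
    {A : Matrix k k ℂ} (hA : A.PosSemidef) : ∃ X : Matrix k k ℂ, A = Xᴴ * X := by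
  obtain ⟨X, hX, -, hXX⟩ :=
    CFC.exists_sqrt_of_isSelfAdjoint_of_quasispectrumRestricts hA.isHermitian
      (QuasispectrumRestricts.nnreal_of_nonneg hA.nonneg)
  exact ⟨X, by rw [← hXX, show Xᴴ = X from hX.star_eq]⟩

lemma trace_psd_mul_nonneg' {k : Type*} [Fintype k] [DecidableEq k]
    {A B : Matrix k k ℂ} (hA : A.PosSemidef) (hB : B.PosSemidef) :
    0 ≤ (A * B).trace := by
  obtain ⟨X, rfl⟩ := psd_eq_conjT_mul_self' hA
  obtain ⟨Y, rfl⟩ := psd_eq_conjT_mul_self' hB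
  have : (Xᴴ * X * (Yᴴ * Y)).trace = ((Y * Xᴴ)ᴴ * (Y * Xᴴ)).trace := by
    rw [Matrix.conjTranspose_mul, Matrix.conjTranspose_conjTranspose,
      show Xᴴ * X * (Yᴴ * Y) = Xᴴ * (X * (Yᴴ * Y)) from Matrix.mul_assoc _ _ _,
      Matrix.trace_mul_comm (Xᴴ) (X * (Yᴴ * Y))]
    simp [Matrix.mul_assoc]
  rw [this]
  exact trace_conjT_mul_self_nonneg' _

lemma trace_pt_mul' {m n : ℕ} (A B : Matrix (Fin m × Fin n) (Fin m × Fin n) ℂ) :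
    (pt A * B).trace = (A * pt B).trace := by
  have expand : ∀ (M N : Matrix (Fin m × Fin n) (Fin m × Fin n) ℂ),
      (M * N).trace = ∑ z : (Fin m × Fin n) × (Fin m × Fin n), M z.1 z.2 * N z.2 z.1 := by
    intro M N
    rw [Matrix.trace]
    simp only [Matrix.diag, Matrix.mul_apply]
    exact (Fintype.sum_prod_type (f := fun z : (Fin m × Fin n) × (Fin m × Fin n) =>
      M z.1 z.2 * N z.2 z.1)).symm
  rw [expand, expand]
  exact Fintype.sum_equiv
    (Equiv.mk (fun z : (Fin m × Fin n) × (Fin m × Fin n) => ((z.1.1, z.2.2), (z.2.1, z.1.2)))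
      (fun z => ((z.1.1, z.2.2), (z.2.1, z.1.2))) (fun z => rfl) (fun z => rfl))
    (fun z => pt A z.1 z.2 * B z.2 z.1) (fun z => A z.1 z.2 * pt B z.2 z.1) (fun z => rfl)

lemma pt_one' {m n : ℕ} : pt (1 : Matrix (Fin m × Fin n) (Fin m × Fin n) ℂ) = 1 := by
  ext p q
  simp only [pt, Matrix.of_apply, Matrix.one_apply, Prod.ext_iff]
  aesop

lemma pt_sub' {m n : ℕ} (A B : Matrix (Fin m × Fin n) (Fin m × Fin n) ℂ) :
    pt (A - B) = pt A - pt B := rfl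

lemma star_mul_self_eq_normSq (z : ℂ) : star z * z = (Complex.normSq z : ℂ) := by
  rw [Complex.star_def, mul_comm, Complex.mul_conj]

lemma bqf_one' {m n : ℕ} (x : Fin m → ℂ) (y : Fin n → ℂ) :
    bqf (1 : Matrix (Fin m × Fin n) (Fin m × Fin n) ℂ) x y
      = (((∑ i, Complex.normSq (x i)) * (∑ k, Complex.normSq (y k)) : ℝ) : ℂ) := by
  simp only [bqf, Matrix.one_mulVec, dotProduct, Pi.star_apply]
  push_cast
  rw [Finset.sum_mul_sum]
  rw [show ∑ p : Fin m × Fin n, star (kron x y p) * kron x y p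
      = ∑ i : Fin m, ∑ k : Fin n, star (kron x y (i, k)) * kron x y (i, k) from
    Fintype.sum_prod_type (f := fun p : Fin m × Fin n => star (kron x y p) * kron x y p)]
  refine Finset.sum_congr rfl fun i _ => Finset.sum_congr rfl fun k _ => ?_
  rw [star_mul_self_eq_normSq]
  simp only [kron, Complex.normSq_mul]
  push_cast
  ring

lemma bqf_smul' {m n : ℕ} (W : Matrix (Fin m × Fin n) (Fin m × Fin n) ℂ)
    (c d : ℂ) (x : Fin m → ℂ) (y : Fin n → ℂ) :
    bqf W (c • x) (d • y) = (star c * c) * (star d * d) * bqf W x y := by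
  have hk : kron (c • x) (d • y) = (c * d) • kron x y := by
    funext p
    simp only [kron, Pi.smul_apply, smul_eq_mul]
    ring
  simp only [bqf, hk, star_smul, smul_dotProduct, Matrix.mulVec_smul, dotProduct_smul,
    smul_eq_mul, star_mul']
  ring

lemma bqf_sub_smul_one' {m n : ℕ} (P : Matrix (Fin m × Fin n) (Fin m × Fin n) ℂ)
    (c : ℂ) (x : Fin m → ℂ) (y : Fin n → ℂ) :
    bqf (P - c • 1) x y = bqf P x y - c * bqf 1 x y := by
  simp only [bqf, Matrix.sub_mulVec, Matrix.smul_mulVec, dotProduct_sub,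
    dotProduct_smul, smul_eq_mul]

theorem stmt_7 (m n : ℕ) (P : Matrix (Fin m × Fin n) (Fin m × Fin n) ℂ)
    (hherm : P.IsHermitian) (hidem : P * P = P) (hne : P ≠ 1)
    (hPT : (pt P).PosSemidef)
    (hIPT : ((1 : Matrix (Fin m × Fin n) (Fin m × Fin n) ℂ) - pt P).PosSemidef)
    (hnz : ¬ ∃ (x : Fin m → ℂ) (y : Fin n → ℂ), x ≠ 0 ∧ y ≠ 0 ∧ bqf P x y = 0)
    (δ : ℝ)
    (hδ : IsLeast {r : ℝ | ∃ (x : Fin m → ℂ) (y : Fin n → ℂ),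
      (∑ i, Complex.normSq (x i)) = 1 ∧ (∑ k, Complex.normSq (y k)) = 1 ∧
        bqf P x y = (r : ℂ)} δ) :
    0 < δ ∧ ∀ ε : ℝ, 0 < ε → ε < δ →
      (∀ (x : Fin m → ℂ) (y : Fin n → ℂ), 0 ≤ bqf (P - (ε : ℂ) • 1) x y) ∧
      ¬ ∃ Q R : Matrix (Fin m × Fin n) (Fin m × Fin n) ℂ,
          Q.PosSemidef ∧ R.PosSemidef ∧ P - (ε : ℂ) • 1 = Q + pt R := by
  -- P is positive semidefinite
  have hP0 : P.PosSemidef := by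
    have h : Pᴴ * P = P := by rw [hherm, hidem]
    exact h ▸ Matrix.posSemidef_conjTranspose_mul_self P
  -- a vector with sum of normSq equal to 1 is nonzero
  have sum_one_ne_zero : ∀ {N : ℕ} (v : Fin N → ℂ), (∑ i, Complex.normSq (v i)) = 1 → v ≠ 0 := by
    intro N v hv hv0
    rw [hv0] at hv
    simp at hv
  -- δ > 0
  obtain ⟨x₀, y₀, hx₀, hy₀, hb₀⟩ := hδ.1
  have hδ0 : 0 ≤ δ := by
    have h := hP0.dotProduct_mulVec_nonneg (kron x₀ y₀)
    rw [show star (kron x₀ y₀) ⬝ᵥ P *ᵥ kron x₀ y₀ = bqf P x₀ y₀ from rfl, hb₀] at h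
    exact_mod_cast Complex.real_le_real.mp (by exact_mod_cast h)
  have hδpos : 0 < δ := by
    rcases hδ0.lt_or_eq with h | h
    · exact h
    · exfalso
      exact hnz ⟨x₀, y₀, sum_one_ne_zero x₀ hx₀, sum_one_ne_zero y₀ hy₀, by rw [hb₀, ← h]; simp⟩
  refine ⟨hδpos, fun ε hε hεδ => ?_⟩
  -- Key lower bound: bqf P x y ≥ δ * ‖x‖² * ‖y‖²
  have key : ∀ (x : Fin m → ℂ) (y : Fin n → ℂ),
      ((δ * ((∑ i, Complex.normSq (x i)) * (∑ k, Complex.normSq (y k))) : ℝ) : ℂ)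
        ≤ bqf P x y := by
    intro x y
    by_cases hx : x = 0
    · subst hx
      simp only [Pi.zero_apply, Complex.normSq_zero, Finset.sum_const, smul_zero, mul_zero,
        zero_mul, Complex.ofReal_zero]
      have : bqf P 0 y = 0 := by
        simp [bqf, kron, dotProduct]
      rw [this]
    by_cases hy : y = 0
    · subst hy
      simp only [Pi.zero_apply, Complex.normSq_zero, Finset.sum_const, smul_zero, mul_zero,
        Complex.ofReal_zero]
      have : bqf P x 0 = 0 := by
        simp [bqf, kron, dotProduct]
      rw [this]
    set A := ∑ i, Complex.normSq (x i) with hA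
    set B := ∑ k, Complex.normSq (y k) with hB
    have hA0 : 0 < A := by
      rcases Finset.sum_nonneg (fun i (_ : i ∈ Finset.univ) => Complex.normSq_nonneg (x i))
        |>.lt_or_eq with h | h
      · exact h
      · exfalso; apply hx
        funext i
        have := (Finset.sum_eq_zero_iff_of_nonneg
          (fun i (_ : i ∈ Finset.univ) => Complex.normSq_nonneg (x i))).mp h.symm i (by simp)
        exact Complex.normSq_eq_zero.mp this
    have hB0 : 0 < B := by
      rcases Finset.sum_nonneg (fun k (_ : k ∈ Finset.univ) => Complex.normSq_nonneg (y k))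
        |>.lt_or_eq with h | h
      · exact h
      · exfalso; apply hy
        funext k
        have := (Finset.sum_eq_zero_iff_of_nonneg
          (fun k (_ : k ∈ Finset.univ) => Complex.normSq_nonneg (y k))).mp h.symm k (by simp)
        exact Complex.normSq_eq_zero.mp this
    set a : ℝ := Real.sqrt A with ha
    set b : ℝ := Real.sqrt B with hb
    have ha2 : a * a = A := Real.mul_self_sqrt hA0.le
    have hb2 : b * b = B := Real.mul_self_sqrt hB0.le
    have ha0 : 0 < a := Real.sqrt_pos.mpr hA0
    have hb0 : 0 < b := Real.sqrt_pos.mpr hB0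
    set x' : Fin m → ℂ := ((a⁻¹ : ℝ) : ℂ) • x with hx'
    set y' : Fin n → ℂ := ((b⁻¹ : ℝ) : ℂ) • y with hy'
    have hxs : (∑ i, Complex.normSq (x' i)) = 1 := by
      simp only [hx', Pi.smul_apply, smul_eq_mul, Complex.normSq_mul, Complex.normSq_ofReal,
        ← Finset.mul_sum, ← hA]
      field_simp
      rw [← ha2]; ring
    have hys : (∑ k, Complex.normSq (y' k)) = 1 := by
      simp only [hy', Pi.smul_apply, smul_eq_mul, Complex.normSq_mul, Complex.normSq_ofReal,
        ← Finset.mul_sum, ← hB]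
      field_simp
      rw [← hb2]; ring
    have hscale : bqf P x' y' = (((A * B)⁻¹ : ℝ) : ℂ) * bqf P x y := by
      rw [hx', hy', bqf_smul']
      congr 1
      simp only [Complex.star_def, Complex.conj_ofReal]
      rw [show ((a⁻¹ : ℝ) : ℂ) * ((a⁻¹ : ℝ) : ℂ) * (((b⁻¹ : ℝ) : ℂ) * ((b⁻¹ : ℝ) : ℂ))
          = (((a⁻¹ * a⁻¹) * (b⁻¹ * b⁻¹) : ℝ) : ℂ) from by push_cast; ring]
      norm_cast
      rw [← ha2, ← hb2, mul_inv, mul_inv, mul_inv]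
    -- bqf P x' y' is a nonneg real
    have hpos : 0 ≤ bqf P x' y' := hP0.dotProduct_mulVec_nonneg (kron x' y')
    obtain ⟨hre, him⟩ := Complex.nonneg_iff.mp hpos
    set r : ℝ := (bqf P x' y').re with hr
    have hreal : bqf P x' y' = (r : ℂ) := Complex.ext rfl him.symm
    have hmem : δ ≤ r := hδ.2 ⟨x', y', hxs, hys, hreal⟩
    -- recover bqf P x y
    have hABne : (A * B : ℝ) ≠ 0 := by positivity
    have hxy : bqf P x y = (((A * B) * r : ℝ) : ℂ) := by
      have h := hscale.symm.trans hreal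
      have hone : ((A * B : ℝ) : ℂ) * (((A * B)⁻¹ : ℝ) : ℂ) = 1 := by
        rw [← Complex.ofReal_mul, mul_inv_cancel₀ hABne, Complex.ofReal_one]
      calc bqf P x y = ((A * B : ℝ) : ℂ) * ((((A * B)⁻¹ : ℝ) : ℂ) * bqf P x y) := by
            rw [← mul_assoc, hone, one_mul]
        _ = ((A * B : ℝ) : ℂ) * (r : ℂ) := by rw [h]
        _ = (((A * B) * r : ℝ) : ℂ) := by push_cast; ring
    rw [hxy, Complex.real_le_real]
    have : δ * (A * B) ≤ r * (A * B) :=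
      mul_le_mul_of_nonneg_right hmem (by positivity)
    linarith
  constructor
  · -- part (a)
    intro x y
    rw [bqf_sub_smul_one', bqf_one']
    have h1 := key x y
    set A := ∑ i, Complex.normSq (x i)
    set B := ∑ k, Complex.normSq (y k)
    have hA0 : 0 ≤ A := Finset.sum_nonneg fun i _ => Complex.normSq_nonneg _
    have hB0 : 0 ≤ B := Finset.sum_nonneg fun k _ => Complex.normSq_nonneg _
    have h2 : ((ε * (A * B) : ℝ) : ℂ) ≤ ((δ * (A * B) : ℝ) : ℂ) := by
      rw [Complex.real_le_real]
      exact mul_le_mul_of_nonneg_right hεδ.le (by positivity)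
    have h3 : ((ε : ℂ)) * ((A * B : ℝ) : ℂ) = ((ε * (A * B) : ℝ) : ℂ) := by push_cast; ring
    rw [h3, sub_nonneg]
    exact le_trans h2 (le_trans h1 (le_of_eq rfl))
  · -- part (b)
    rintro ⟨Q, R, hQ, hR, hEq⟩
    set M : Matrix (Fin m × Fin n) (Fin m × Fin n) ℂ := 1 - P with hM
    have hMh : Mᴴ = M := by
      rw [hM, Matrix.conjTranspose_sub, Matrix.conjTranspose_one, hherm]
    have hMM : Mᴴ * M = M := by
      rw [hMh, hM, Matrix.sub_mul, Matrix.one_mul, Matrix.mul_sub, Matrix.mul_one, hidem]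
      abel
    have hS : M.PosSemidef := hMM ▸ Matrix.posSemidef_conjTranspose_mul_self M
    have h1 : 0 ≤ (Q * M).trace := trace_psd_mul_nonneg' hQ hS
    have h2 : 0 ≤ (pt R * M).trace := by
      rw [trace_pt_mul', hM, pt_sub', pt_one']
      exact trace_psd_mul_nonneg' hR hIPT
    have h3 : ((P - (ε : ℂ) • 1) * M).trace = (Q * M).trace + (pt R * M).trace := by
      rw [hEq, Matrix.add_mul, Matrix.trace_add]
    have h4 : (P - (ε : ℂ) • 1) * M = -((ε : ℂ) • M) := by
      rw [hM, Matrix.sub_mul, Matrix.mul_sub, Matrix.mul_one, hidem, sub_self,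
        Matrix.smul_mul, Matrix.one_mul, zero_sub]
    -- trace of M is a positive real
    set T : ℝ := ∑ p : Fin m × Fin n, ∑ q : Fin m × Fin n, Complex.normSq (M q p) with hT
    have htr : M.trace = (T : ℂ) := by
      conv_lhs => rw [← hMM]
      rw [Matrix.trace]
      simp only [Matrix.diag, Matrix.mul_apply, Matrix.conjTranspose_apply]
      rw [hT]
      push_cast
      refine Finset.sum_congr rfl fun p _ => Finset.sum_congr rfl fun q _ => ?_
      rw [star_mul_self_eq_normSq]
    have hMne : M ≠ 0 := by
      intro h
      apply hne
      rw [hM, sub_eq_zero] at h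
      exact h.symm
    have hT0 : 0 < T := by
      rcases (Finset.sum_nonneg fun p (_ : p ∈ Finset.univ) =>
        Finset.sum_nonneg fun q (_ : q ∈ Finset.univ) => Complex.normSq_nonneg (M q p))
        |>.lt_or_eq with h | h
      · exact h
      · exfalso; apply hMne
        ext q p
        have h1 := (Finset.sum_eq_zero_iff_of_nonneg (fun p (_ : p ∈ Finset.univ) =>
          Finset.sum_nonneg fun q (_ : q ∈ Finset.univ) =>
            Complex.normSq_nonneg (M q p))).mp h.symm p (by simp)
        have h2 := (Finset.sum_eq_zero_iff_of_nonneg (fun q (_ : q ∈ Finset.univ) =>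
          Complex.normSq_nonneg (M q p))).mp h1 q (by simp)
        simpa using Complex.normSq_eq_zero.mp h2
    have hsum : (0 : ℂ) ≤ ((P - (ε : ℂ) • 1) * M).trace := by
      rw [h3]; exact add_nonneg h1 h2
    rw [h4, Matrix.trace_neg, Matrix.trace_smul, htr] at hsum
    have : (0 : ℝ) ≤ -(ε * T) := by
      have h := (Complex.nonneg_iff.mp hsum).1
      simpa using h
    nlinarith
end

section
/- Let φ be a complex-linear map from the m×m complex matrices to the n×n complex matrices satisfying φ(Xᴴ) = (φ(X))ᴴ for all X (so that P_φ takes real values). Then φ is positive (φ(A) is positive semidefinite for every positive semidefinite A) if and only if the Choi polynomial P_φ is bounded below, i.e., there exists a real number c such that c ≤ P_φ(x,y) for all x ∈ ℂ^m and y ∈ ℂ^n. -/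
open Matrix
open scoped ComplexOrder

/-- The Choi polynomial `P_φ(x,y) = yᴴ · φ(x xᴴ) · y`. -/
noncomputable def choiPoly {m n : ℕ}
    (φ : Matrix (Fin m) (Fin m) ℂ →ₗ[ℂ] Matrix (Fin n) (Fin n) ℂ)
    (x : Fin m → ℂ) (y : Fin n → ℂ) : ℂ :=
  star y ⬝ᵥ (φ (Matrix.vecMulVec x (star x)) *ᵥ y)

lemma aux_vecMulVec_herm {m : ℕ} (x : Fin m → ℂ) :
    (Matrix.vecMulVec x (star x))ᴴ = Matrix.vecMulVec x (star x) := by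
  ext i j
  simp [Matrix.vecMulVec_apply, Matrix.conjTranspose_apply, mul_comm]

lemma aux_choiPoly_smul {m n : ℕ}
    (φ : Matrix (Fin m) (Fin m) ℂ →ₗ[ℂ] Matrix (Fin n) (Fin n) ℂ)
    (t : ℝ) (x : Fin m → ℂ) (y : Fin n → ℂ) :
    choiPoly φ ((t : ℂ) • x) y = ((t : ℂ) ^ 2) * choiPoly φ x y := by
  have h : Matrix.vecMulVec ((t : ℂ) • x) (star ((t : ℂ) • x))
      = ((t : ℂ) ^ 2) • Matrix.vecMulVec x (star x) := by
    ext i j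
    simp [Matrix.vecMulVec_apply, Complex.star_def, _root_.map_mul, Complex.conj_ofReal]
    ring
  unfold choiPoly
  rw [h, φ.map_smul, Matrix.smul_mulVec, dotProduct_smul, smul_eq_mul]

lemma aux_nonneg {m n : ℕ}
    (φ : Matrix (Fin m) (Fin m) ℂ →ₗ[ℂ] Matrix (Fin n) (Fin n) ℂ)
    {c : ℝ} (hc : ∀ (x : Fin m → ℂ) (y : Fin n → ℂ), (c : ℂ) ≤ choiPoly φ x y)
    (x : Fin m → ℂ) (y : Fin n → ℂ) : (0 : ℂ) ≤ choiPoly φ x y := by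
  have him : (choiPoly φ x y).im = 0 := by
    have := hc x y
    rw [Complex.le_def] at this
    simpa using this.2.symm
  rw [Complex.le_def]
  refine ⟨?_, by simpa using him.symm⟩
  simp only [Complex.zero_re]
  by_contra hlt
  push_neg at hlt
  set r : ℝ := -(choiPoly φ x y).re with hr
  have hrpos : 0 < r := by simp [hr]; linarith
  set t : ℝ := max 1 ((|c| + 1) / r) with ht
  have ht1 : (1:ℝ) ≤ t := le_max_left _ _
  have htr : |c| + 1 ≤ t * r := by
    rw [ht]
    calc |c| + 1 = ((|c| + 1) / r) * r := by field_simp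
    _ ≤ t * r := by
      apply mul_le_mul_of_nonneg_right (le_max_right _ _) hrpos.le
  have h2 : t * r ≤ t ^ 2 * r := by
    have : t ≤ t ^ 2 := by nlinarith
    exact mul_le_mul_of_nonneg_right this hrpos.le
  have := hc ((t : ℂ) • x) y
  rw [aux_choiPoly_smul, Complex.le_def] at this
  have hre := this.1
  simp only [Complex.ofReal_re, Complex.mul_re, Complex.ofReal_im] at hre
  -- hre : c ≤ (t^2) * (choiPoly φ x y).re - 0 * im …
  have hre' : c ≤ t ^ 2 * (choiPoly φ x y).re := by
    have hpow : ((t:ℂ)^2).re = t^2 ∧ ((t:ℂ)^2).im = 0 := by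
      constructor <;> simp [pow_two, Complex.mul_re, Complex.mul_im]
    calc c ≤ (((t:ℂ)^2) * choiPoly φ x y).re := hre
    _ = t ^ 2 * (choiPoly φ x y).re := by
        rw [Complex.mul_re, hpow.1, hpow.2, him]; ring
  have : t ^ 2 * (choiPoly φ x y).re = -(t ^ 2 * r) := by rw [hr]; ring
  have habs : -c ≤ |c| := neg_le_abs c
  nlinarith

lemma aux_rankOne_psd {m n : ℕ}
    (φ : Matrix (Fin m) (Fin m) ℂ →ₗ[ℂ] Matrix (Fin n) (Fin n) ℂ)
    (hsa : ∀ X : Matrix (Fin m) (Fin m) ℂ, φ Xᴴ = (φ X)ᴴ)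
    {c : ℝ} (hc : ∀ (x : Fin m → ℂ) (y : Fin n → ℂ), (c : ℂ) ≤ choiPoly φ x y)
    (x : Fin m → ℂ) : (φ (Matrix.vecMulVec x (star x))).PosSemidef := by
  refine Matrix.PosSemidef.of_dotProduct_mulVec_nonneg ?_ ?_
  · show _ = _
    rw [← hsa, aux_vecMulVec_herm]
  · intro y
    exact aux_nonneg φ hc x y

lemma aux_psd_sum {n : ℕ} {ι : Type*} (s : Finset ι) (f : ι → Matrix (Fin n) (Fin n) ℂ)
    (h : ∀ i ∈ s, (f i).PosSemidef) : (∑ i ∈ s, f i).PosSemidef := by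
  classical
  induction s using Finset.induction with
  | empty => simpa using Matrix.PosSemidef.zero
  | insert a s hnot ih =>
    rw [Finset.sum_insert hnot]
    exact (h _ (Finset.mem_insert_self _ _)).add (ih fun i hi => h _ (Finset.mem_insert_of_mem hi))

theorem stmt_12 (m n : ℕ)
    (φ : Matrix (Fin m) (Fin m) ℂ →ₗ[ℂ] Matrix (Fin n) (Fin n) ℂ)
    (hsa : ∀ X : Matrix (Fin m) (Fin m) ℂ, φ Xᴴ = (φ X)ᴴ) :
    (∀ A : Matrix (Fin m) (Fin m) ℂ, A.PosSemidef → (φ A).PosSemidef) ↔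
    (∃ c : ℝ, ∀ (x : Fin m → ℂ) (y : Fin n → ℂ), (c : ℂ) ≤ choiPoly φ x y) := by
  constructor
  · intro hpos
    refine ⟨0, fun x y => ?_⟩
    have hA : (Matrix.vecMulVec x (star x)).PosSemidef := by
      refine Matrix.PosSemidef.of_dotProduct_mulVec_nonneg ?_ ?_
      · show _ = _; exact aux_vecMulVec_herm x
      · intro z
        have : star z ⬝ᵥ (Matrix.vecMulVec x (star x) *ᵥ z)
            = star (star x ⬝ᵥ z) * (star x ⬝ᵥ z) := by
          simp [dotProduct, Matrix.mulVec, Matrix.vecMulVec_apply, Finset.mul_sum,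
            Finset.sum_mul, mul_comm, mul_left_comm, mul_assoc]
          rw [Finset.sum_comm]
        rw [this]
        exact star_mul_self_nonneg _
    simpa [choiPoly] using (hpos _ hA).dotProduct_mulVec_nonneg y
  · rintro ⟨c, hc⟩
    intro A hA
    obtain ⟨B, rfl⟩ : ∃ B : Matrix (Fin m) (Fin m) ℂ, A = Bᴴ * B := by
      open scoped MatrixOrder in exact CStarAlgebra.nonneg_iff_eq_star_mul_self.mp hA.nonneg
    have hdec : Bᴴ * B = ∑ k : Fin m, Matrix.vecMulVec (star (B k)) (star (star (B k))) := by
      ext i j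
      simp [Matrix.mul_apply, Matrix.conjTranspose_apply, Matrix.vecMulVec_apply,
        Matrix.sum_apply]
    rw [hdec, map_sum]
    exact aux_psd_sum _ _ (fun k _ => aux_rankOne_psd φ hsa hc (star (B k)))
end

section
/- Let φ be a complex-linear map from the m×m complex matrices to the n×n complex matrices such that: (i) φ maps every matrix with real entries to a matrix with real entries; (ii) φ(Xᴴ) = (φ(X))ᴴ for all X; and (iii) φ is decomposable, i.e., there exist finite families of complex m×n matrices V_1,…,V_k and U_1,…,U_l such that φ(X) = ∑_i V_iᴴ X V_i + ∑_j U_jᴴ Xᵗ U_j for all X ∈ M_m(ℂ). Then there exists a finite family of real m×n matrices W_1,…,W_N such that φ(X) = ∑_r W_rᵗ X W_r for every real symmetric m×m matrix X (the restriction of φ to real symmetric matrices is a congruence map). -/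
open Matrix
open scoped ComplexOrder

lemma key_term (m n : ℕ) (C : Matrix (Fin m) (Fin n) ℂ) (X : Matrix (Fin m) (Fin m) ℝ)
    (a b : Fin n) :
    ((Cᴴ * X.map (fun r => (r : ℂ)) * C) a b).re =
      ((C.map Complex.re)ᵀ * X * C.map Complex.re
        + (C.map Complex.im)ᵀ * X * C.map Complex.im) a b := by
  simp only [Matrix.mul_apply, Matrix.add_apply, Matrix.conjTranspose_apply,
    Matrix.transpose_apply, Matrix.map_apply, Finset.sum_mul, Complex.re_sum,
    ← Finset.sum_add_distrib]
  refine Finset.sum_congr rfl fun p _ => Finset.sum_congr rfl fun q _ => ?_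
  simp [Complex.mul_re, Complex.mul_im, RCLike.star_def]

theorem stmt_14 (m n : ℕ)
    (φ : Matrix (Fin m) (Fin m) ℂ →ₗ[ℂ] Matrix (Fin n) (Fin n) ℂ)
    (hreal : ∀ X : Matrix (Fin m) (Fin m) ℂ,
      (∀ i j, ∃ r : ℝ, X i j = (r : ℂ)) → ∀ k l, ∃ r : ℝ, φ X k l = (r : ℂ))
    (hsa : ∀ X : Matrix (Fin m) (Fin m) ℂ, φ Xᴴ = (φ X)ᴴ)
    (hdec : ∃ (k l : ℕ) (V : Fin k → Matrix (Fin m) (Fin n) ℂ)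
        (U : Fin l → Matrix (Fin m) (Fin n) ℂ),
      ∀ X : Matrix (Fin m) (Fin m) ℂ,
        φ X = ∑ i, (V i)ᴴ * X * V i + ∑ j, (U j)ᴴ * Xᵀ * U j) :
    ∃ (N : ℕ) (W : Fin N → Matrix (Fin m) (Fin n) ℝ),
      ∀ X : Matrix (Fin m) (Fin m) ℝ, X = Xᵀ →
        φ (X.map (fun r => (r : ℂ))) =
          (∑ r, (W r)ᵀ * X * W r).map (fun r => (r : ℂ)) := by
  obtain ⟨k, l, V, U, hφ⟩ := hdec
  let A : Fin k ⊕ Fin l → Matrix (Fin m) (Fin n) ℂ := Sum.elim V U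
  let W' : (Fin k ⊕ Fin l) ⊕ (Fin k ⊕ Fin l) → Matrix (Fin m) (Fin n) ℝ :=
    Sum.elim (fun i => (A i).map Complex.re) (fun i => (A i).map Complex.im)
  let e := Fintype.equivFin ((Fin k ⊕ Fin l) ⊕ (Fin k ⊕ Fin l))
  refine ⟨_, fun r => W' (e.symm r), fun X hX => ?_⟩
  have hXt : (X.map (fun r => (r : ℂ)))ᵀ = X.map (fun r => (r : ℂ)) := by
    ext i j
    simp only [Matrix.transpose_apply, Matrix.map_apply]
    rw [show X j i = Xᵀ j i from congrFun (congrFun hX j) i, Matrix.transpose_apply]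
  have hR : ∀ a b, ∃ r : ℝ, φ (X.map (fun r => (r : ℂ))) a b = (r : ℂ) := by
    refine hreal _ fun i j => ⟨X i j, rfl⟩
  ext a b
  obtain ⟨r, hr⟩ := hR a b
  have hre : φ (X.map (fun r => (r : ℂ))) a b =
      ((φ (X.map (fun r => (r : ℂ))) a b).re : ℂ) := by
    rw [hr]; simp
  rw [hre, Matrix.map_apply]
  norm_cast
  rw [hφ, hXt]
  have hRHS : (∑ r, (W' (e.symm r))ᵀ * X * W' (e.symm r))
      = ∑ i : (Fin k ⊕ Fin l) ⊕ (Fin k ⊕ Fin l), (W' i)ᵀ * X * W' i :=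
    Fintype.sum_equiv e.symm _ _ fun _ => rfl
  rw [hRHS]
  simp only [Fintype.sum_sum_type, Matrix.add_apply, Matrix.sum_apply, Complex.add_re,
    Complex.re_sum, key_term, W', A, Sum.elim_inl, Sum.elim_inr]
  simp only [Matrix.add_apply, Finset.sum_add_distrib]
  abel
end

section
/- Fix integers 1 ≤ m ≤ n, set r = n − m, let a be a real number, and let ε_0, …, ε_r be real weights with 0 < ε_α ≤ 1. For α = 0, …, r let V_α be the n×m matrix with entries (V_α)_{q,p} = 1 if q = p + α and 0 otherwise (1 ≤ p ≤ m, 1 ≤ q ≤ n), and define the linear map Φ : M_m(ℂ) → M_n(ℂ) by Φ(X) = a·Tr(X)·I_n − ∑_{α=0}^{r} ε_α · V_α X V_αᴴ. For j = 1, …, n set s_j = ∑_{α = max(0, j−m)}^{min(r, j−1)} ε_α. If a ≥ max_{1 ≤ j ≤ n} s_j, then Φ is decomposable: there exist finite families of complex m×n matrices A_1,…,A_k and B_1,…,B_l such that Φ(X) = ∑_i A_iᴴ X A_i + ∑_j B_jᴴ Xᵗ B_j for all X ∈ M_m(ℂ). -/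
open Matrix
open scoped ComplexOrder

lemma aux_ct {m n : ℕ} (i : Fin m) (j : Fin n) (c : ℂ) :
    (Matrix.single i j c)ᴴ = Matrix.single j i (star c) := by
  ext a b
  simp only [Matrix.single, conjTranspose_apply, of_apply]
  aesop

lemma aux_triple {m n p q : ℕ} (i : Fin m) (j : Fin n) (Y : Matrix (Fin n) (Fin p) ℂ)
    (i' : Fin p) (j' : Fin q) :
    Matrix.single i j (1:ℂ) * Y * Matrix.single i' j' (1:ℂ) = Y j i' • Matrix.single i j' (1:ℂ) := by
  ext a b
  simp [Matrix.mul_apply, Matrix.single, Finset.sum_ite_eq, ite_and]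
  aesop

lemma aux_one {m : ℕ} : (1 : Matrix (Fin m) (Fin m) ℂ) = ∑ j : Fin m, Matrix.single j j (1:ℂ) := by
  ext a b
  rw [Matrix.sum_apply]
  simp only [Matrix.single, Matrix.one_apply, of_apply, ite_and]
  rw [Finset.sum_ite_eq']
  simp

lemma aux_term {m : ℕ} (X : Matrix (Fin m) (Fin m) ℂ) (i j : Fin m) :
    (Matrix.single i j (1:ℂ) - Matrix.single j i (1:ℂ))ᴴ * Xᵀ *
      (Matrix.single i j (1:ℂ) - Matrix.single j i (1:ℂ))
    = X i i • Matrix.single j j (1:ℂ) + X j j • Matrix.single i i (1:ℂ)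
      - X j i • Matrix.single j i (1:ℂ) - X i j • Matrix.single i j (1:ℂ) := by
  rw [conjTranspose_sub, aux_ct, aux_ct]
  simp only [star_one, sub_mul, mul_sub, aux_triple, transpose_apply]
  module

lemma aux_red {m : ℕ} (X : Matrix (Fin m) (Fin m) ℂ) :
    ∑ p : Fin m × Fin m,
      ((Matrix.single p.1 p.2 (1:ℂ) - Matrix.single p.2 p.1 (1:ℂ))ᴴ * Xᵀ *
        (Matrix.single p.1 p.2 (1:ℂ) - Matrix.single p.2 p.1 (1:ℂ)))
    = (2 * Matrix.trace X) • (1 : Matrix (Fin m) (Fin m) ℂ) - (2:ℂ) • X := by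
  simp only [Fintype.sum_prod_type, aux_term]
  simp only [Finset.sum_sub_distrib, Finset.sum_add_distrib]
  have h1 : ∑ i : Fin m, ∑ j : Fin m, X i i • Matrix.single j j (1:ℂ)
      = Matrix.trace X • (1 : Matrix (Fin m) (Fin m) ℂ) := by
    simp only [← Finset.smul_sum, ← aux_one, ← Finset.sum_smul]
    congr 1
  have h2 : ∑ i : Fin m, ∑ j : Fin m, X j j • Matrix.single i i (1:ℂ)
      = Matrix.trace X • (1 : Matrix (Fin m) (Fin m) ℂ) := by
    rw [Finset.sum_comm]
    simp only [← Finset.smul_sum, ← aux_one, ← Finset.sum_smul]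
    congr 1
  have h3 : ∑ i : Fin m, ∑ j : Fin m, X j i • Matrix.single j i (1:ℂ) = X := by
    rw [Finset.sum_comm]
    simp only [smul_single, smul_eq_mul, mul_one]
    exact (matrix_eq_sum_single X).symm
  have h4 : ∑ i : Fin m, ∑ j : Fin m, X i j • Matrix.single i j (1:ℂ) = X := by
    simp only [smul_single, smul_eq_mul, mul_one]
    exact (matrix_eq_sum_single X).symm
  rw [h1, h2, h3, h4]
  module

lemma aux_diag {n : ℕ} (f : Fin n → ℂ) :
    Matrix.diagonal f = ∑ j : Fin n, Matrix.single j j (f j) := by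
  ext a b
  rw [Matrix.sum_apply]
  simp only [Matrix.single, Matrix.diagonal_apply, of_apply, ite_and]
  rw [Finset.sum_ite_eq']
  simp

lemma aux_cp {m n : ℕ} (X : Matrix (Fin m) (Fin m) ℂ) (c : Fin n → ℂ) :
    ∑ p : Fin m × Fin n,
      ((c p.2 • Matrix.single p.1 p.2 (1:ℂ))ᴴ * X * (c p.2 • Matrix.single p.1 p.2 (1:ℂ)))
    = Matrix.trace X • Matrix.diagonal (fun j => star (c j) * c j) := by
  have h1 : ∀ p : Fin m × Fin n,
      ((c p.2 • Matrix.single p.1 p.2 (1:ℂ))ᴴ * X * (c p.2 • Matrix.single p.1 p.2 (1:ℂ)))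
      = (star (c p.2) * c p.2) • (X p.1 p.1 • Matrix.single p.2 p.2 (1:ℂ)) := by
    intro p
    rw [conjTranspose_smul, aux_ct]
    simp only [star_one, Matrix.smul_mul, Matrix.mul_smul, aux_triple]
    rw [smul_smul, smul_smul, smul_smul]
    ring_nf
  simp only [h1]
  rw [Fintype.sum_prod_type, Finset.sum_comm]
  have h2 : Matrix.trace X = ∑ p : Fin m, X p p := rfl
  rw [aux_diag, Finset.smul_sum]
  refine Finset.sum_congr rfl fun j _ => ?_
  simp only
  rw [← Finset.smul_sum, ← Finset.sum_smul, ← h2, smul_comm, smul_single,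
    smul_eq_mul, mul_one]

lemma aux_vv {m n : ℕ} (hm : 1 ≤ m) (α : Fin (n - m + 1)) :
    (Matrix.of fun (q : Fin n) (p : Fin m) => if (q:ℕ) = (p:ℕ) + (α:ℕ) then (1:ℂ) else 0) *
      (Matrix.of fun (q : Fin n) (p : Fin m) => if (q:ℕ) = (p:ℕ) + (α:ℕ) then (1:ℂ) else 0)ᴴ
    = Matrix.diagonal (fun q : Fin n =>
        if (q:ℕ) + 1 - m ≤ (α:ℕ) ∧ (α:ℕ) ≤ (q:ℕ) then (1:ℂ) else 0) := by
  ext q q'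
  rw [Matrix.mul_apply, Matrix.diagonal_apply]
  have hsum : ∀ p : Fin m,
      (Matrix.of fun (q : Fin n) (p : Fin m) => if (q:ℕ) = (p:ℕ) + (α:ℕ) then (1:ℂ) else 0) q p *
        (Matrix.of fun (q : Fin n) (p : Fin m) =>
          if (q:ℕ) = (p:ℕ) + (α:ℕ) then (1:ℂ) else 0)ᴴ p q'
      = if ((q:ℕ) = (p:ℕ) + (α:ℕ) ∧ (q':ℕ) = (p:ℕ) + (α:ℕ)) then (1:ℂ) else 0 := by
    intro p
    rw [conjTranspose_apply]
    simp only [of_apply]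
    split_ifs <;> simp_all
  rw [Finset.sum_congr rfl fun p _ => hsum p]
  by_cases hq : q = q'
  · subst hq
    rw [if_pos rfl]
    by_cases h : (q:ℕ) + 1 - m ≤ (α:ℕ) ∧ (α:ℕ) ≤ (q:ℕ)
    · rw [if_pos h]
      have hlt : (q:ℕ) - (α:ℕ) < m := by omega
      rw [Finset.sum_eq_single (⟨(q:ℕ) - (α:ℕ), hlt⟩ : Fin m)]
      · rw [if_pos ⟨by simp only [Fin.val_mk]; omega, by simp only [Fin.val_mk]; omega⟩]
      · intro p _ hp
        rw [if_neg]
        intro hc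
        exact hp (Fin.ext (by simp only [Fin.val_mk]; omega))
      · simp
    · rw [if_neg h]
      apply Finset.sum_eq_zero
      intro p _
      rw [if_neg]
      intro hc
      have hpm : (p:ℕ) < m := p.isLt
      omega
  · rw [if_neg hq]
    apply Finset.sum_eq_zero
    intro p _
    rw [if_neg]
    intro hc
    exact hq (Fin.ext (by omega))

theorem stmt_15 (m n : ℕ) (hm : 1 ≤ m) (hmn : m ≤ n) (a : ℝ)
    (ε : Fin (n - m + 1) → ℝ) (hε : ∀ α, 0 < ε α ∧ ε α ≤ 1)
    (Φ : Matrix (Fin m) (Fin m) ℂ → Matrix (Fin n) (Fin n) ℂ)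
    (hΦ : ∀ X, Φ X = (a : ℂ) • Matrix.trace X • (1 : Matrix (Fin n) (Fin n) ℂ)
      - ∑ α : Fin (n - m + 1), (ε α : ℂ) •
          ((Matrix.of fun (q : Fin n) (p : Fin m) =>
              if (q : ℕ) = (p : ℕ) + (α : ℕ) then (1 : ℂ) else 0) * X *
            (Matrix.of fun (q : Fin n) (p : Fin m) =>
              if (q : ℕ) = (p : ℕ) + (α : ℕ) then (1 : ℂ) else 0)ᴴ))
    (ha : ∀ j : Fin n,
      (∑ α : Fin (n - m + 1),
        if (j : ℕ) + 1 - m ≤ (α : ℕ) ∧ (α : ℕ) ≤ (j : ℕ) then ε α else 0) ≤ a) :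
    ∃ (k l : ℕ) (A : Fin k → Matrix (Fin m) (Fin n) ℂ)
        (B : Fin l → Matrix (Fin m) (Fin n) ℂ),
      ∀ X : Matrix (Fin m) (Fin m) ℂ,
        Φ X = ∑ i, (A i)ᴴ * X * A i + ∑ j, (B j)ᴴ * Xᵀ * B j := by
  
  classical
  set V : Fin (n - m + 1) → Matrix (Fin n) (Fin m) ℂ := fun α =>
    Matrix.of fun (q : Fin n) (p : Fin m) =>
      if (q : ℕ) = (p : ℕ) + (α : ℕ) then (1 : ℂ) else 0 with hV
  set dR : Fin n → ℝ := fun j => a - ∑ α : Fin (n - m + 1),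
      if (j : ℕ) + 1 - m ≤ (α : ℕ) ∧ (α : ℕ) ≤ (j : ℕ) then ε α else 0 with hdR
  have hdR0 : ∀ j, 0 ≤ dR j := fun j => sub_nonneg.2 (ha j)
  -- the diagonal matrix identity
  have hD : (a : ℂ) • (1 : Matrix (Fin n) (Fin n) ℂ)
      - ∑ α : Fin (n - m + 1), (ε α : ℂ) • (V α * (V α)ᴴ)
      = Matrix.diagonal (fun j => ((dR j : ℝ) : ℂ)) := by
    have h1 : ∀ α : Fin (n - m + 1), (ε α : ℂ) • (V α * (V α)ᴴ)
        = Matrix.diagonal (fun q : Fin n =>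
            if (q:ℕ) + 1 - m ≤ (α:ℕ) ∧ (α:ℕ) ≤ (q:ℕ) then (ε α : ℂ) else 0) := by
      intro α
      simp only [hV]
      rw [aux_vv hm α]
      ext q q'
      simp only [Matrix.smul_apply, Matrix.diagonal_apply]
      split_ifs <;> simp
    simp only [h1]
    ext q q'
    rw [Matrix.sub_apply, Matrix.sum_apply]
    by_cases hq : q = q'
    · subst hq
      simp only [Matrix.diagonal_apply_eq, Matrix.smul_apply, Matrix.one_apply_eq,
        smul_eq_mul, mul_one]
      rw [hdR]
      simp only
      rw [Complex.ofReal_sub, Complex.ofReal_sum]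
      congr 1
      refine Finset.sum_congr rfl fun α _ => ?_
      simp [apply_ite Complex.ofReal]
    · simp [Matrix.diagonal_apply_ne _ hq, Matrix.one_apply_ne hq]
  set A' : Fin m × Fin n → Matrix (Fin m) (Fin n) ℂ := fun p =>
    ((Real.sqrt (dR p.2) : ℝ) : ℂ) • Matrix.single p.1 p.2 (1:ℂ) with hA'
  set B' : Fin (n - m + 1) × (Fin m × Fin m) → Matrix (Fin m) (Fin n) ℂ := fun t =>
    ((Real.sqrt (ε t.1 / 2) : ℝ) : ℂ) •
      ((Matrix.single t.2.1 t.2.2 (1:ℂ) - Matrix.single t.2.2 t.2.1 (1:ℂ)) * (V t.1)ᴴ)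
    with hB'
  set eB : (Fin (n - m + 1) × (Fin m × Fin m)) ≃ Fin ((n - m + 1) * (m * m)) :=
    (Equiv.prodCongr (Equiv.refl (Fin (n - m + 1))) finProdFinEquiv).trans finProdFinEquiv
    with heB
  refine ⟨m * n, (n - m + 1) * (m * m),
    fun i => A' (finProdFinEquiv.symm i), fun i => B' (eB.symm i), fun X => ?_⟩
  have e1 : ∑ i : Fin (m * n),
      (A' (finProdFinEquiv.symm i))ᴴ * X * A' (finProdFinEquiv.symm i)
      = ∑ p : Fin m × Fin n, (A' p)ᴴ * X * A' p :=
    Equiv.sum_comp finProdFinEquiv.symm (fun p => (A' p)ᴴ * X * A' p)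
  have e2 : ∑ i : Fin ((n - m + 1) * (m * m)),
      (B' (eB.symm i))ᴴ * Xᵀ * B' (eB.symm i)
      = ∑ t : Fin (n - m + 1) × (Fin m × Fin m), (B' t)ᴴ * Xᵀ * B' t :=
    Equiv.sum_comp eB.symm (fun t => (B' t)ᴴ * Xᵀ * B' t)
  have hA : ∑ p : Fin m × Fin n, (A' p)ᴴ * X * A' p
      = Matrix.trace X • Matrix.diagonal (fun j => ((dR j : ℝ) : ℂ)) := by
    simp only [hA']
    rw [aux_cp X (fun j => ((Real.sqrt (dR j) : ℝ) : ℂ))]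
    have hc : (fun j : Fin n => star ((Real.sqrt (dR j) : ℝ) : ℂ) * ((Real.sqrt (dR j) : ℝ) : ℂ))
        = fun j => ((dR j : ℝ) : ℂ) := by
      funext j
      rw [Complex.star_def, Complex.conj_ofReal, ← Complex.ofReal_mul,
        Real.mul_self_sqrt (hdR0 j)]
    rw [hc]
  have hB : ∑ t : Fin (n - m + 1) × (Fin m × Fin m), (B' t)ᴴ * Xᵀ * B' t
      = ∑ α : Fin (n - m + 1), (ε α : ℂ) •
          (V α * (Matrix.trace X • (1 : Matrix (Fin m) (Fin m) ℂ) - X) * (V α)ᴴ) := by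
    rw [Fintype.sum_prod_type]
    refine Finset.sum_congr rfl fun α _ => ?_
    have hterm : ∀ p : Fin m × Fin m, (B' (α, p))ᴴ * Xᵀ * B' (α, p)
        = ((ε α / 2 : ℝ) : ℂ) •
          (V α * ((Matrix.single p.1 p.2 (1:ℂ) - Matrix.single p.2 p.1 (1:ℂ))ᴴ * Xᵀ *
            (Matrix.single p.1 p.2 (1:ℂ) - Matrix.single p.2 p.1 (1:ℂ))) * (V α)ᴴ) := by
      intro p
      simp only [hB']
      rw [conjTranspose_smul, conjTranspose_mul, conjTranspose_conjTranspose]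
      simp only [Matrix.smul_mul, Matrix.mul_smul, smul_smul]
      rw [Complex.star_def, Complex.conj_ofReal, ← Complex.ofReal_mul,
        Real.mul_self_sqrt (div_nonneg (hε α).1.le (by norm_num))]
      simp only [Matrix.mul_assoc]
    simp only [hterm]
    rw [← Finset.smul_sum, ← Matrix.sum_mul, ← Matrix.mul_sum, aux_red X]
    have h2 : ((2 * Matrix.trace X) • (1 : Matrix (Fin m) (Fin m) ℂ) - (2:ℂ) • X)
        = (2:ℂ) • (Matrix.trace X • (1 : Matrix (Fin m) (Fin m) ℂ) - X) := by
      module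
    rw [h2, Matrix.mul_smul, Matrix.smul_mul, smul_smul]
    congr 1
    push_cast
    ring
  rw [hΦ X, e1, e2, hA, hB, ← hD]
  simp only [Matrix.mul_sub, Matrix.sub_mul, Matrix.mul_smul, Matrix.smul_mul, Matrix.mul_one,
    smul_sub, Finset.sum_sub_distrib]
  have hc1 : Matrix.trace X • ((a:ℂ) • (1 : Matrix (Fin n) (Fin n) ℂ))
      = (a:ℂ) • Matrix.trace X • (1 : Matrix (Fin n) (Fin n) ℂ) := smul_comm _ _ _
  have hc2 : Matrix.trace X • ∑ α : Fin (n - m + 1), (ε α : ℂ) • (V α * (V α)ᴴ)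
      = ∑ α : Fin (n - m + 1), (ε α : ℂ) • (Matrix.trace X • (V α * (V α)ᴴ)) := by
    rw [Finset.smul_sum]
    exact Finset.sum_congr rfl fun α _ => smul_comm _ _ _
  rw [hc1, hc2]
  abel
end

section
/- Fix an integer m ≥ 1, a real number ε₀ with 0 < ε₀ ≤ 1, and a real number a, and define Φ : M_m(ℂ) → M_m(ℂ) by Φ(X) = a·Tr(X)·I_m − ε₀·X. Then the following are equivalent: (a) Φ is decomposable, i.e., there exist finite families of complex m×m matrices A_1,…,A_k and B_1,…,B_l with Φ(X) = ∑_i A_iᴴ X A_i + ∑_j B_jᴴ Xᵗ B_j for all X; (b) Φ is positive, i.e., Φ(A) is positive semidefinite for every positive semidefinite A; (c) a ≥ ε₀. -/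
open Matrix
open scoped ComplexOrder

private lemma ekey {m : ℕ} (a b c d : Fin m) (X : Matrix (Fin m) (Fin m) ℂ) :
    Matrix.single a b (1:ℂ) * X * Matrix.single c d 1 = X b c • Matrix.single a d 1 := by
  ext i j
  simp [mul_apply, Matrix.single, ite_and, Finset.sum_ite_eq, mul_comm]
  split <;> simp_all

private lemma ect {m : ℕ} (a b : Fin m) :
    (Matrix.single a b (1:ℂ))ᴴ = Matrix.single b a 1 := by
  ext i j
  simp [conjTranspose_apply, Matrix.single, and_comm]

private lemma esum {m : ℕ} : ∑ q : Fin m, Matrix.single q q (1:ℂ) = 1 := by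
  ext i j
  simp [Matrix.single, Matrix.sum_apply, one_apply, ite_and, Finset.sum_ite_eq, eq_comm]

private lemma esumX {m : ℕ} (X : Matrix (Fin m) (Fin m) ℂ) :
    ∑ p : Fin m, ∑ q : Fin m, X p q • Matrix.single p q (1:ℂ) = X := by
  conv_rhs => rw [matrix_eq_sum_single X]
  simp [smul_single]

private lemma sumA {m : ℕ} (X : Matrix (Fin m) (Fin m) ℂ) :
    ∑ p : Fin m, ∑ q : Fin m,
      (Matrix.single p q (1:ℂ))ᴴ * X * Matrix.single p q 1 = X.trace • 1 := by
  simp only [ect, ekey]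
  have : ∀ p : Fin m, ∑ q : Fin m, X p p • Matrix.single q q (1:ℂ)
      = X p p • (1 : Matrix (Fin m) (Fin m) ℂ) := by
    intro p
    rw [← Finset.smul_sum, esum]
  simp only [this]
  rw [← Finset.sum_smul, trace]
  rfl

private lemma sumB {m : ℕ} (X : Matrix (Fin m) (Fin m) ℂ) :
    ∑ p : Fin m, ∑ q : Fin m,
      (Matrix.single p q (1:ℂ) - Matrix.single q p 1)ᴴ * Xᵀ *
        (Matrix.single p q (1:ℂ) - Matrix.single q p 1)
      = (2:ℂ) • (X.trace • 1 - X) := by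
  have expand : ∀ p q : Fin m,
      (Matrix.single p q (1:ℂ) - Matrix.single q p 1)ᴴ * Xᵀ *
        (Matrix.single p q (1:ℂ) - Matrix.single q p 1)
      = X p p • Matrix.single q q 1 + X q q • Matrix.single p p 1
        - X q p • Matrix.single q p 1 - X p q • Matrix.single p q 1 := by
    intro p q
    simp only [conjTranspose_sub, ect, sub_mul, mul_sub, ekey, transpose_apply]
    abel
  simp only [expand]
  have h1 : ∑ p : Fin m, ∑ q : Fin m, X p p • Matrix.single q q (1:ℂ) = X.trace • 1 := by
    have : ∀ p : Fin m, ∑ q : Fin m, X p p • Matrix.single q q (1:ℂ)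
        = X p p • (1 : Matrix (Fin m) (Fin m) ℂ) := fun p => by rw [← Finset.smul_sum, esum]
    simp only [this]
    rw [← Finset.sum_smul, trace]; rfl
  have h2 : ∑ p : Fin m, ∑ q : Fin m, X q q • Matrix.single p p (1:ℂ) = X.trace • 1 := by
    rw [Finset.sum_comm]; exact h1
  have h3 : ∑ p : Fin m, ∑ q : Fin m, X q p • Matrix.single q p (1:ℂ) = X := by
    rw [Finset.sum_comm]; exact esumX X
  have h4 : ∑ p : Fin m, ∑ q : Fin m, X p q • Matrix.single p q (1:ℂ) = X := esumX X
  calc ∑ p : Fin m, ∑ q : Fin m,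
        (X p p • Matrix.single q q (1:ℂ) + X q q • Matrix.single p p 1
          - X q p • Matrix.single q p 1 - X p q • Matrix.single p q 1)
      = (∑ p : Fin m, ∑ q : Fin m, X p p • Matrix.single q q (1:ℂ))
        + (∑ p : Fin m, ∑ q : Fin m, X q q • Matrix.single p p (1:ℂ))
        - (∑ p : Fin m, ∑ q : Fin m, X q p • Matrix.single q p (1:ℂ))
        - (∑ p : Fin m, ∑ q : Fin m, X p q • Matrix.single p q (1:ℂ)) := by
        simp [Finset.sum_sub_distrib, Finset.sum_add_distrib]
    _ = (2:ℂ) • (X.trace • 1 - X) := by rw [h1, h2, h3, h4]; module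

theorem stmt_16 (m : ℕ) (hm : 1 ≤ m) (ε₀ a : ℝ) (hε₀ : 0 < ε₀ ∧ ε₀ ≤ 1)
    (Φ : Matrix (Fin m) (Fin m) ℂ → Matrix (Fin m) (Fin m) ℂ)
    (hΦ : ∀ X, Φ X = (a : ℂ) • Matrix.trace X • (1 : Matrix (Fin m) (Fin m) ℂ)
      - (ε₀ : ℂ) • X) :
    ((∃ (k l : ℕ) (A : Fin k → Matrix (Fin m) (Fin m) ℂ)
        (B : Fin l → Matrix (Fin m) (Fin m) ℂ),
      ∀ X : Matrix (Fin m) (Fin m) ℂ,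
        Φ X = ∑ i, (A i)ᴴ * X * A i + ∑ j, (B j)ᴴ * Xᵀ * B j) ↔ ε₀ ≤ a) ∧
    ((∀ A : Matrix (Fin m) (Fin m) ℂ, A.PosSemidef → (Φ A).PosSemidef) ↔ ε₀ ≤ a) := by
  obtain ⟨hε₀pos, -⟩ := hε₀
  -- decomposable → positive
  have hDP : (∃ (k l : ℕ) (A : Fin k → Matrix (Fin m) (Fin m) ℂ)
        (B : Fin l → Matrix (Fin m) (Fin m) ℂ),
      ∀ X : Matrix (Fin m) (Fin m) ℂ,
        Φ X = ∑ i, (A i)ᴴ * X * A i + ∑ j, (B j)ᴴ * Xᵀ * B j) →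
      (∀ A : Matrix (Fin m) (Fin m) ℂ, A.PosSemidef → (Φ A).PosSemidef) := by
    rintro ⟨k, l, A, B, hAB⟩ M hM
    rw [hAB]
    refine Matrix.PosSemidef.add ?_ ?_
    · exact Finset.sum_induction _ _ (fun x y hx hy => hx.add hy) Matrix.PosSemidef.zero
        (fun i _ => hM.conjTranspose_mul_mul_same (A i))
    · exact Finset.sum_induction _ _ (fun x y hx hy => hx.add hy) Matrix.PosSemidef.zero
        (fun j _ => hM.transpose.conjTranspose_mul_mul_same (B j))
  -- positive → ε₀ ≤ a
  have hPa : (∀ A : Matrix (Fin m) (Fin m) ℂ, A.PosSemidef → (Φ A).PosSemidef) → ε₀ ≤ a := by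
    intro hpos
    set z : Fin m := ⟨0, hm⟩
    have hE : (Matrix.single z z (1:ℂ)).PosSemidef := by
      refine .of_dotProduct_mulVec_nonneg ?_ ?_
      · ext i j
        simp [conjTranspose_apply, Matrix.single, and_comm]
      · intro x
        have : star x ⬝ᵥ (Matrix.single z z (1:ℂ)) *ᵥ x = star (x z) * x z := by
          simp [dotProduct, mulVec, Matrix.single, ite_and, Finset.sum_ite_eq, mul_comm]
        rw [this]
        exact star_mul_self_nonneg _
    have htr : (Matrix.single z z (1:ℂ)).trace = 1 := by
      simp [trace, Matrix.diag, Matrix.single, Finset.sum_ite_eq]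
    have hpsd := hpos _ hE
    have hq := hpsd.dotProduct_mulVec_nonneg (Pi.single z 1)
    have hval : star (Pi.single z (1:ℂ)) ⬝ᵥ (Φ (Matrix.single z z 1)) *ᵥ Pi.single z 1
        = (a : ℂ) - ε₀ := by
      rw [hΦ, htr]
      simp [dotProduct, mulVec, Pi.single_apply, Matrix.single, Matrix.sub_apply, Matrix.smul_apply,
        one_apply, Finset.sum_ite_eq, ite_and]
    rw [hval] at hq
    rw [← Complex.ofReal_sub] at hq
    have := Complex.zero_le_real.mp hq
    linarith
  -- ε₀ ≤ a → decomposable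
  have haD : ε₀ ≤ a → (∃ (k l : ℕ) (A : Fin k → Matrix (Fin m) (Fin m) ℂ)
        (B : Fin l → Matrix (Fin m) (Fin m) ℂ),
      ∀ X : Matrix (Fin m) (Fin m) ℂ,
        Φ X = ∑ i, (A i)ᴴ * X * A i + ∑ j, (B j)ᴴ * Xᵀ * B j) := by
    intro ha
    set c : ℂ := (Real.sqrt (a - ε₀) : ℂ) with hc
    set d : ℂ := (Real.sqrt (ε₀ / 2) : ℂ) with hd
    refine ⟨m * m, m * m,
      fun i => c • Matrix.single (finProdFinEquiv.symm i).1 (finProdFinEquiv.symm i).2 1,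
      fun i => d • (Matrix.single (finProdFinEquiv.symm i).1 (finProdFinEquiv.symm i).2 1
        - Matrix.single (finProdFinEquiv.symm i).2 (finProdFinEquiv.symm i).1 1), ?_⟩
    intro X
    have hcc : star c * c = ((a - ε₀ : ℝ) : ℂ) := by
      rw [hc, Complex.star_def, Complex.conj_ofReal, ← Complex.ofReal_mul,
        Real.mul_self_sqrt (by linarith)]
    have hdd : star d * d = ((ε₀ / 2 : ℝ) : ℂ) := by
      rw [hd, Complex.star_def, Complex.conj_ofReal, ← Complex.ofReal_mul,
        Real.mul_self_sqrt (by linarith)]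
    have hs1 : ∑ i : Fin (m * m),
        (c • Matrix.single (finProdFinEquiv.symm i).1 (finProdFinEquiv.symm i).2 (1:ℂ))ᴴ * X *
          (c • Matrix.single (finProdFinEquiv.symm i).1 (finProdFinEquiv.symm i).2 1)
        = ((a - ε₀ : ℝ) : ℂ) • (X.trace • 1) := by
      rw [Equiv.sum_comp finProdFinEquiv.symm
        (fun p : Fin m × Fin m => (c • Matrix.single p.1 p.2 (1:ℂ))ᴴ * X *
          (c • Matrix.single p.1 p.2 1))]
      rw [Fintype.sum_prod_type]
      have : ∀ p q : Fin m, (c • Matrix.single p q (1:ℂ))ᴴ * X * (c • Matrix.single p q 1)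
          = ((a - ε₀ : ℝ) : ℂ) • ((Matrix.single p q (1:ℂ))ᴴ * X * Matrix.single p q 1) := by
        intro p q
        rw [conjTranspose_smul]
        rw [smul_mul_assoc, smul_mul_assoc, mul_smul_comm, smul_smul, hcc]
      simp only [this, ← Finset.smul_sum]
      rw [sumA]
    have hs2 : ∑ i : Fin (m * m),
        (d • (Matrix.single (finProdFinEquiv.symm i).1 (finProdFinEquiv.symm i).2 (1:ℂ)
          - Matrix.single (finProdFinEquiv.symm i).2 (finProdFinEquiv.symm i).1 1))ᴴ * Xᵀ *
          (d • (Matrix.single (finProdFinEquiv.symm i).1 (finProdFinEquiv.symm i).2 1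
            - Matrix.single (finProdFinEquiv.symm i).2 (finProdFinEquiv.symm i).1 1))
        = ((ε₀ / 2 : ℝ) : ℂ) • ((2:ℂ) • (X.trace • 1 - X)) := by
      rw [Equiv.sum_comp finProdFinEquiv.symm
        (fun p : Fin m × Fin m => (d • (Matrix.single p.1 p.2 (1:ℂ)
          - Matrix.single p.2 p.1 1))ᴴ * Xᵀ *
          (d • (Matrix.single p.1 p.2 1 - Matrix.single p.2 p.1 1)))]
      rw [Fintype.sum_prod_type]
      have : ∀ p q : Fin m,
          (d • (Matrix.single p q (1:ℂ) - Matrix.single q p 1))ᴴ * Xᵀ *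
            (d • (Matrix.single p q 1 - Matrix.single q p 1))
          = ((ε₀ / 2 : ℝ) : ℂ) • ((Matrix.single p q (1:ℂ) - Matrix.single q p 1)ᴴ * Xᵀ *
            (Matrix.single p q 1 - Matrix.single q p 1)) := by
        intro p q
        rw [conjTranspose_smul, smul_mul_assoc, smul_mul_assoc, mul_smul_comm, smul_smul, hdd]
      simp only [this, ← Finset.smul_sum]
      rw [sumB]
    rw [hΦ, hs1, hs2]
    push_cast
    module
  refine ⟨⟨fun h => hPa (hDP h), haD⟩, ⟨hPa, fun h => hDP (haD h)⟩⟩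
end

section
/- Fix an integer r ≥ 0 and set n = 2 + r. For α = 0, …, r let V_α be the n×2 matrix with entries (V_α)_{q,p} = 1 if q = p + α and 0 otherwise (p ∈ {1,2}, 1 ≤ q ≤ n). For a real number a, define Φ_a : M_2(ℂ) → M_n(ℂ) by Φ_a(X) = a·Tr(X)·I_n − ∑_{α=0}^{r} V_α X V_αᴴ. Then Φ_a is positive (Φ_a(A) is positive semidefinite for every positive semidefinite A ∈ M_2(ℂ)) if and only if a ≥ 1 + cos(π/(r+2)). -/
open Matrix Finset Real Complex
open scoped ComplexOrder


lemma sin_pos_aux (k N : ℕ) (h1 : 1 ≤ k) (h2 : k ≤ N + 1) :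
    0 < Real.sin (k * (π / (N + 2))) := by
  apply Real.sin_pos_of_pos_of_lt_pi
  · have : (0:ℝ) < π / (N+2) := by positivity
    have : (1:ℝ) ≤ k := by exact_mod_cast h1
    nlinarith
  · have hπ := Real.pi_pos
    have hk' : k < N + 2 := by omega
    have hk : (k:ℝ) < N + 2 := by exact_mod_cast hk'
    rw [div_eq_mul_inv, ← mul_assoc]
    have hN : (0:ℝ) < ((N:ℝ)+2)⁻¹ := by positivity
    calc (k:ℝ) * π * ((N:ℝ)+2)⁻¹ < ((N:ℝ)+2) * π * ((N:ℝ)+2)⁻¹ := by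
          apply mul_lt_mul_of_pos_right _ hN
          exact mul_lt_mul_of_pos_right hk hπ
      _ = π := by field_simp

lemma amgm_aux (p q x y : ℝ) (hp : 0 < p) (hq : 0 < q) :
    2 * (x * y) ≤ (q / p) * x ^ 2 + (p / q) * y ^ 2 := by
  rw [div_mul_eq_mul_div, div_mul_eq_mul_div, div_add_div _ _ (ne_of_gt hp) (ne_of_gt hq)]
  rw [le_div_iff₀ (by positivity)]
  nlinarith [sq_nonneg (q * x - p * y)]

lemma chain_ineq (N : ℕ) (x : ℕ → ℝ) :
    ∑ i ∈ range N, x i * x (i + 1) ≤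
      Real.cos (π / (N + 2)) * ∑ i ∈ range (N + 1), x i ^ 2 := by
  set φ := π / (N + 2) with hφ
  set f : ℕ → ℝ := fun i => (Real.sin (((i:ℝ) + 2) * φ) / Real.sin (((i:ℝ) + 1) * φ)) * x i ^ 2 with hf
  set g : ℕ → ℝ := fun i => (Real.sin ((i:ℝ) * φ) / Real.sin (((i:ℝ) + 1) * φ)) * x i ^ 2 with hg
  have hsin : ∀ k : ℕ, 1 ≤ k → k ≤ N + 1 → 0 < Real.sin ((k:ℝ) * φ) := by
    intro k h1 h2; exact sin_pos_aux k N h1 h2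
  have key : ∀ i < N, 2 * (x i * x (i + 1)) ≤ f i + g (i + 1) := by
    intro i hi
    have hp : 0 < Real.sin (((i:ℝ) + 1) * φ) := by
      have := hsin (i + 1) (by omega) (by omega); push_cast at this; exact this
    have hq : 0 < Real.sin (((i:ℝ) + 2) * φ) := by
      have := hsin (i + 2) (by omega) (by omega); push_cast at this; exact this
    have h := amgm_aux _ _ (x i) (x (i + 1)) hp hq
    show 2 * (x i * x (i+1)) ≤ (Real.sin (((i:ℝ) + 2) * φ) / Real.sin (((i:ℝ) + 1) * φ)) * x i ^ 2
          + (Real.sin (((i+1:ℕ):ℝ) * φ) / Real.sin ((((i+1:ℕ):ℝ) + 1) * φ)) * x (i+1) ^ 2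
    have e1 : (((i+1:ℕ):ℝ)) * φ = ((i:ℝ) + 1) * φ := by push_cast; ring
    have e2 : ((((i+1:ℕ):ℝ)) + 1) * φ = ((i:ℝ) + 2) * φ := by push_cast; ring
    rw [e1, e2]; exact h
  have step1 : 2 * ∑ i ∈ range N, x i * x (i + 1) ≤ ∑ i ∈ range N, (f i + g (i + 1)) := by
    rw [Finset.mul_sum]
    exact Finset.sum_le_sum fun i hi => key i (Finset.mem_range.mp hi)
  have hg0 : g 0 = 0 := by simp [hg]
  have hfN : f N = 0 := by
    have h : ((N:ℝ) + 2) * φ = π := by rw [hφ]; field_simp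
    show (Real.sin (((N:ℝ) + 2) * φ) / Real.sin (((N:ℝ) + 1) * φ)) * x N ^ 2 = 0
    rw [h, Real.sin_pi]; simp
  have step2 : ∑ i ∈ range N, (f i + g (i + 1)) = ∑ i ∈ range (N + 1), (f i + g i) := by
    rw [Finset.sum_add_distrib, Finset.sum_add_distrib]
    congr 1
    · rw [Finset.sum_range_succ, hfN, add_zero]
    · rw [Finset.sum_range_succ' g, hg0, add_zero]
  have step3 : ∀ i ∈ range (N + 1), f i + g i = 2 * Real.cos φ * x i ^ 2 := by
    intro i hi
    have hiN : i ≤ N := Nat.lt_succ_iff.mp (Finset.mem_range.mp hi)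
    have hp : 0 < Real.sin (((i:ℝ) + 1) * φ) := by
      have := hsin (i + 1) (by omega) (by omega); push_cast at this; exact this
    have hid : Real.sin (((i:ℝ) + 2) * φ) + Real.sin ((i:ℝ) * φ)
        = 2 * Real.cos φ * Real.sin (((i:ℝ) + 1) * φ) := by
      have e1 : ((i:ℝ) + 2) * φ = ((i:ℝ) + 1) * φ + φ := by ring
      have e2 : (i:ℝ) * φ = ((i:ℝ) + 1) * φ - φ := by ring
      rw [e1, e2, Real.sin_add, Real.sin_sub]; ring
    show (Real.sin (((i:ℝ) + 2) * φ) / Real.sin (((i:ℝ) + 1) * φ)) * x i ^ 2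
        + (Real.sin ((i:ℝ) * φ) / Real.sin (((i:ℝ) + 1) * φ)) * x i ^ 2 = 2 * Real.cos φ * x i ^ 2
    rw [div_mul_eq_mul_div, div_mul_eq_mul_div, ← add_div, ← add_mul, hid]
    field_simp
  have hfin := step1.trans_eq (step2.trans (Finset.sum_congr rfl step3))
  have h2 : ∑ i ∈ range (N+1), 2 * Real.cos φ * x i ^ 2
      = 2 * (Real.cos φ * ∑ i ∈ range (N+1), x i ^ 2) := by
    rw [Finset.mul_sum, Finset.mul_sum]
    exact Finset.sum_congr rfl fun i _ => by ring
  rw [h2] at hfin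
  linarith

lemma cos_theta_nonneg (r : ℕ) : 0 ≤ Real.cos (π / (r + 2)) := by
  apply Real.cos_nonneg_of_mem_Icc
  constructor
  · have := Real.pi_pos
    have h : (0:ℝ) ≤ π / (r + 2) := by positivity
    linarith
  · have := Real.pi_pos
    rw [div_le_div_iff₀ (by positivity) (by norm_num)]
    nlinarith [Nat.cast_nonneg (α := ℝ) r]

lemma rank1 (r : ℕ) (b c : ℂ) (w : ℕ → ℂ) :
    ∑ α ∈ range (r + 1), Complex.normSq (b * w α + c * w (α + 1)) ≤
      (1 + Real.cos (π / (r + 2))) * (Complex.normSq b + Complex.normSq c) *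
        ∑ q ∈ range (r + 2), Complex.normSq (w q) := by
  classical
  set θ := π / (r + 2) with hθ
  have hcos : 0 ≤ Real.cos θ := cos_theta_nonneg r
  set z : ℕ → ℂ := fun α => if α < r + 1 then b * w α + c * w (α + 1) else 0 with hz
  set zm : ℕ → ℂ := fun q => if q = 0 then 0 else z (q - 1) with hzm
  have hzm_succ : ∀ k : ℕ, zm (k + 1) = z k := by intro k; simp [hzm]
  have hzm0 : zm 0 = 0 := by simp [hzm]
  have hztop : z (r + 1) = 0 := by simp [hz]
  set u : ℕ → ℂ := fun q => (starRingEnd ℂ) b * z q + (starRingEnd ℂ) c * zm q with hu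
  set S : ℝ := ∑ α ∈ range (r + 1), Complex.normSq (z α) with hS
  set W : ℝ := ∑ q ∈ range (r + 2), Complex.normSq (w q) with hW
  set U : ℝ := ∑ q ∈ range (r + 2), Complex.normSq (u q) with hU
  have hS0 : 0 ≤ S := Finset.sum_nonneg fun i _ => Complex.normSq_nonneg _
  have hW0 : 0 ≤ W := Finset.sum_nonneg fun i _ => Complex.normSq_nonneg _
  have hgoal_eq : ∑ α ∈ range (r + 1), Complex.normSq (b * w α + c * w (α + 1)) = S := by
    apply Finset.sum_congr rfl
    intro α hα
    rw [Finset.mem_range] at hα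
    simp [hz, show α ≤ r by omega]
  rw [hgoal_eq]
  -- Step A : (S : ℂ) = ∑ conj (u q) * w q
  have stepA : (S : ℂ) = ∑ q ∈ range (r + 2), (starRingEnd ℂ) (u q) * w q := by
    have expand : ∀ q, (starRingEnd ℂ) (u q) * w q
        = b * ((starRingEnd ℂ) (z q) * w q) + c * ((starRingEnd ℂ) (zm q) * w q) := by
      intro q
      simp only [hu, _root_.map_add, _root_.map_mul, Complex.conj_conj]
      ring
    rw [Finset.sum_congr rfl fun q _ => expand q, Finset.sum_add_distrib,
      ← Finset.mul_sum, ← Finset.mul_sum]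
    have e1 : ∑ q ∈ range (r + 2), (starRingEnd ℂ) (z q) * w q
        = ∑ q ∈ range (r + 1), (starRingEnd ℂ) (z q) * w q := by
      rw [Finset.sum_range_succ, hztop]; simp
    have e2 : ∑ q ∈ range (r + 2), (starRingEnd ℂ) (zm q) * w q
        = ∑ k ∈ range (r + 1), (starRingEnd ℂ) (z k) * w (k + 1) := by
      rw [Finset.sum_range_succ' (fun q => (starRingEnd ℂ) (zm q) * w q), hzm0]
      simp only [_root_.map_zero, zero_mul, add_zero]
      exact Finset.sum_congr rfl fun k _ => by rw [hzm_succ]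
    rw [e1, e2]
    rw [hS]
    push_cast
    rw [Finset.mul_sum, Finset.mul_sum, ← Finset.sum_add_distrib]
    apply Finset.sum_congr rfl
    intro α hα
    rw [Finset.mem_range] at hα
    have hze : z α = b * w α + c * w (α + 1) := by simp [hz, show α ≤ r by omega]
    have h2 : b * ((starRingEnd ℂ) (z α) * w α) + c * ((starRingEnd ℂ) (z α) * w (α + 1))
        = (starRingEnd ℂ) (z α) * (b * w α + c * w (α + 1)) := by ring
    rw [h2, ← hze, Complex.normSq_eq_conj_mul_self]
  -- Step B : S^2 ≤ U * W
  have stepB : S ^ 2 ≤ U * W := by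
    have habs : S ≤ ∑ q ∈ range (r + 2), ‖(u q)‖ * ‖(w q)‖ := by
      calc S = ‖(S : ℂ)‖ := by
            rw [Complex.norm_real, Real.norm_eq_abs]; exact (_root_.abs_of_nonneg hS0).symm
        _ = ‖(∑ q ∈ range (r + 2), (starRingEnd ℂ) (u q) * w q)‖ := by rw [stepA]
        _ ≤ ∑ q ∈ range (r + 2), ‖((starRingEnd ℂ) (u q) * w q)‖ :=
            norm_sum_le _ _
        _ = ∑ q ∈ range (r + 2), ‖(u q)‖ * ‖(w q)‖ := by
            apply Finset.sum_congr rfl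
            intro q _
            rw [norm_mul, Complex.norm_conj]
    have hcs := Finset.sum_mul_sq_le_sq_mul_sq (range (r + 2))
      (fun q => ‖(u q)‖) (fun q => ‖(w q)‖)
    have hU' : ∑ q ∈ range (r + 2), ‖(u q)‖ ^ 2 = U := by
      exact Finset.sum_congr rfl fun q _ => Complex.sq_norm _
    have hW' : ∑ q ∈ range (r + 2), ‖(w q)‖ ^ 2 = W := by
      exact Finset.sum_congr rfl fun q _ => Complex.sq_norm _
    rw [hU', hW'] at hcs
    have h1 : 0 ≤ ∑ q ∈ range (r + 2), ‖(u q)‖ * ‖(w q)‖ :=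
      Finset.sum_nonneg fun q _ => mul_nonneg (norm_nonneg _) (norm_nonneg _)
    nlinarith
  -- Step C : U ≤ (1 + cos θ) * (normSq b + normSq c) * S
  have stepC : U ≤ (1 + Real.cos θ) * (Complex.normSq b + Complex.normSq c) * S := by
    have point : ∀ q, Complex.normSq (u q) ≤
        Complex.normSq b * Complex.normSq (z q) + Complex.normSq c * Complex.normSq (zm q)
          + 2 * ‖b‖ * ‖c‖ * (‖(z q)‖ * ‖(zm q)‖) := by
      intro q
      simp only [hu]
      rw [Complex.normSq_add]
      have h1 : Complex.normSq ((starRingEnd ℂ) b * z q) = Complex.normSq b * Complex.normSq (z q) := by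
        rw [Complex.normSq_mul, Complex.normSq_conj]
      have h2 : Complex.normSq ((starRingEnd ℂ) c * zm q) = Complex.normSq c * Complex.normSq (zm q) := by
        rw [Complex.normSq_mul, Complex.normSq_conj]
      have h3 : ((starRingEnd ℂ) b * z q * (starRingEnd ℂ) ((starRingEnd ℂ) c * zm q)).re
          ≤ ‖b‖ * ‖c‖ * (‖(z q)‖ * ‖(zm q)‖) := by
        calc ((starRingEnd ℂ) b * z q * (starRingEnd ℂ) ((starRingEnd ℂ) c * zm q)).re
            ≤ ‖((starRingEnd ℂ) b * z q * (starRingEnd ℂ) ((starRingEnd ℂ) c * zm q))‖ :=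
              Complex.re_le_norm _
          _ = ‖b‖ * ‖c‖ * (‖(z q)‖ * ‖(zm q)‖) := by
              simp only [_root_.map_mul, norm_mul, Complex.norm_conj]; ring
      linarith
    have hsum := Finset.sum_le_sum fun q (_ : q ∈ range (r + 2)) => point q
    have e1 : ∑ q ∈ range (r + 2), Complex.normSq (z q) = S := by
      rw [Finset.sum_range_succ, hztop]; simp [hS]
    have e2 : ∑ q ∈ range (r + 2), Complex.normSq (zm q) = S := by
      rw [Finset.sum_range_succ' (fun q => Complex.normSq (zm q)), hzm0]
      simp only [Complex.normSq_zero, add_zero]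
      rw [hS]
      exact Finset.sum_congr rfl fun k _ => by rw [hzm_succ]
    have e3 : ∑ q ∈ range (r + 2), ‖(z q)‖ * ‖(zm q)‖
        ≤ Real.cos θ * S := by
      have e3a : ∑ q ∈ range (r + 2), ‖(z q)‖ * ‖(zm q)‖
          = ∑ k ∈ range (r + 1), ‖(z k)‖ * ‖(z (k + 1))‖ := by
        rw [Finset.sum_range_succ' (fun q => ‖(z q)‖ * ‖(zm q)‖), hzm0]
        simp only [_root_.map_zero, norm_zero, mul_zero, add_zero]
        exact Finset.sum_congr rfl fun k _ => by rw [hzm_succ]; ring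
      have e3b : ∑ k ∈ range (r + 1), ‖(z k)‖ * ‖(z (k + 1))‖
          = ∑ k ∈ range r, ‖(z k)‖ * ‖(z (k + 1))‖ := by
        rw [Finset.sum_range_succ, hztop]; simp
      have e3c := chain_ineq r (fun k => ‖(z k)‖)
      have e3d : ∑ k ∈ range (r + 1), ‖(z k)‖ ^ 2 = S := by
        rw [hS]; exact Finset.sum_congr rfl fun k _ => Complex.sq_norm _
      rw [e3a, e3b]
      calc ∑ k ∈ range r, ‖(z k)‖ * ‖(z (k + 1))‖
          ≤ Real.cos (π / (r + 2)) * ∑ k ∈ range (r + 1), ‖(z k)‖ ^ 2 := e3c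
        _ = Real.cos θ * S := by rw [e3d, hθ]
    have habc : 2 * ‖b‖ * ‖c‖ ≤ Complex.normSq b + Complex.normSq c := by
      rw [← Complex.sq_norm b, ← Complex.sq_norm c]
      nlinarith [sq_nonneg (‖b‖ - ‖c‖)]
    have hcross : 2 * ‖b‖ * ‖c‖ *
        (∑ q ∈ range (r + 2), ‖(z q)‖ * ‖(zm q)‖)
        ≤ (Complex.normSq b + Complex.normSq c) * (Real.cos θ * S) := by
      have hnn : 0 ≤ 2 * ‖b‖ * ‖c‖ := by positivity
      have h4 : 0 ≤ (∑ q ∈ range (r + 2), ‖(z q)‖ * ‖(zm q)‖) :=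
        Finset.sum_nonneg fun q _ => mul_nonneg (norm_nonneg _) (norm_nonneg _)
      calc 2 * ‖b‖ * ‖c‖ *
            (∑ q ∈ range (r + 2), ‖(z q)‖ * ‖(zm q)‖)
          ≤ 2 * ‖b‖ * ‖c‖ * (Real.cos θ * S) := by
            apply mul_le_mul_of_nonneg_left e3 hnn
        _ ≤ (Complex.normSq b + Complex.normSq c) * (Real.cos θ * S) := by
            apply mul_le_mul_of_nonneg_right habc
            exact mul_nonneg hcos hS0
    rw [hU]
    calc ∑ q ∈ range (r + 2), Complex.normSq (u q)
        ≤ ∑ q ∈ range (r + 2), (Complex.normSq b * Complex.normSq (z q)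
            + Complex.normSq c * Complex.normSq (zm q)
            + 2 * ‖b‖ * ‖c‖ * (‖(z q)‖ * ‖(zm q)‖)) := hsum
      _ = Complex.normSq b * S + Complex.normSq c * S
            + 2 * ‖b‖ * ‖c‖ *
              (∑ q ∈ range (r + 2), ‖(z q)‖ * ‖(zm q)‖) := by
          rw [Finset.sum_add_distrib, Finset.sum_add_distrib, ← Finset.mul_sum, ← Finset.mul_sum,
            ← Finset.mul_sum, e1, e2]
      _ ≤ Complex.normSq b * S + Complex.normSq c * S
            + (Complex.normSq b + Complex.normSq c) * (Real.cos θ * S) := by linarith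
      _ = (1 + Real.cos θ) * (Complex.normSq b + Complex.normSq c) * S := by ring
  -- Step D : conclude
  rcases eq_or_lt_of_le hS0 with hSz | hSpos
  · rw [← hSz]
    have : 0 ≤ (1 + Real.cos θ) * (Complex.normSq b + Complex.normSq c) * W :=
      mul_nonneg (mul_nonneg (by linarith)
        (add_nonneg (Complex.normSq_nonneg _) (Complex.normSq_nonneg _))) hW0
    linarith
  · set K := (1 + Real.cos θ) * (Complex.normSq b + Complex.normSq c) with hK
    have hUK : U * W ≤ K * S * W := by
      apply mul_le_mul_of_nonneg_right stepC hW0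
    nlinarith


lemma exp_sum_zero (n : ℕ) (hn : 2 ≤ n) :
    ∑ k ∈ range n, Complex.exp (((2 * k * (π / n) : ℝ)) * Complex.I) = 0 := by
  have hn' : (0:ℝ) < n := by positivity
  have hne : (n:ℂ) ≠ 0 := by
    simp only [ne_eq, Nat.cast_eq_zero]; omega
  set x : ℂ := Complex.exp (((2 * (π / n) : ℝ)) * Complex.I) with hx
  have hterm : ∀ k : ℕ, Complex.exp (((2 * k * (π / n) : ℝ)) * Complex.I) = x ^ k := by
    intro k
    rw [hx, ← Complex.exp_nat_mul]
    congr 1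
    push_cast
    ring
  have hxn : x ^ n = 1 := by
    rw [hx, ← Complex.exp_nat_mul]
    have harg : (n : ℂ) * (((2 * (π / n) : ℝ)) * Complex.I) = ((1:ℤ) : ℂ) * (2 * π * Complex.I) := by
      push_cast
      field_simp
    rw [harg, Complex.exp_eq_one_iff.mpr ⟨1, rfl⟩]
  have hx1 : x ≠ 1 := by
    rw [hx]
    intro h
    rw [Complex.exp_eq_one_iff] at h
    obtain ⟨m, hm⟩ := h
    have hm' : ((2 * (π / n) : ℝ) : ℂ) * Complex.I = ((m:ℂ) * (2 * ↑π)) * Complex.I := by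
      rw [hm]; ring
    have hI := mul_right_cancel₀ Complex.I_ne_zero hm'
    have hr : (2 * (π / n) : ℝ) = (m : ℝ) * (2 * π) := by exact_mod_cast hI
    have hπ := Real.pi_pos
    have h1 : 0 < 2 * (π / n) := by positivity
    have h2 : 2 * (π / n) ≤ π := by
      rw [show 2 * (π / (n:ℝ)) = (2 * π) / n by ring, div_le_iff₀ hn']
      nlinarith [show (2:ℝ) ≤ n from by exact_mod_cast hn]
    have hm0 : (0:ℝ) < m := by nlinarith
    have hm0' : (0:ℤ) < m := by exact_mod_cast hm0
    have hm1 : (1:ℝ) ≤ (m:ℝ) := by exact_mod_cast hm0'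
    nlinarith
  rw [Finset.sum_congr rfl fun k _ => hterm k, geom_sum_eq hx1, hxn]
  simp

lemma cos_sum_even (n : ℕ) (hn : 2 ≤ n) :
    ∑ k ∈ range n, Real.cos (2 * k * (π / n)) = 0 := by
  calc ∑ k ∈ range n, Real.cos (2 * k * (π / n))
      = ∑ k ∈ range n, (Complex.exp (((2 * k * (π / n) : ℝ)) * Complex.I)).re :=
        Finset.sum_congr rfl fun k _ => (Complex.exp_ofReal_mul_I_re _).symm
    _ = (∑ k ∈ range n, Complex.exp (((2 * k * (π / n) : ℝ)) * Complex.I)).re :=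
        (Complex.re_sum _ _).symm
    _ = 0 := by rw [exp_sum_zero n hn]; rfl

lemma cos_sum_odd (n : ℕ) (hn : 2 ≤ n) :
    ∑ q ∈ range n, Real.cos ((2 * q + 1) * (π / n)) = 0 := by
  have key : ∑ q ∈ range n, Complex.exp ((((2 * q + 1) * (π / n) : ℝ)) * Complex.I) = 0 := by
    have expand : ∀ q : ℕ, Complex.exp ((((2 * q + 1) * (π / n) : ℝ)) * Complex.I)
        = Complex.exp (((π / n : ℝ)) * Complex.I)
          * Complex.exp (((2 * q * (π / n) : ℝ)) * Complex.I) := by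
      intro q
      rw [← Complex.exp_add]
      congr 1
      push_cast
      ring
    rw [Finset.sum_congr rfl fun q _ => expand q, ← Finset.mul_sum, exp_sum_zero n hn, mul_zero]
  calc ∑ q ∈ range n, Real.cos ((2 * q + 1) * (π / n))
      = ∑ q ∈ range n, (Complex.exp ((((2 * q + 1) * (π / n) : ℝ)) * Complex.I)).re :=
        Finset.sum_congr rfl fun q _ => (Complex.exp_ofReal_mul_I_re _).symm
    _ = (∑ q ∈ range n, Complex.exp ((((2 * q + 1) * (π / n) : ℝ)) * Complex.I)).re :=
        (Complex.re_sum _ _).symm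
    _ = 0 := by rw [key]; rfl

lemma sum_sin_sq (n : ℕ) (hn : 2 ≤ n) :
    ∑ q ∈ range n, Real.sin (((q:ℝ) + 1/2) * (π / n)) ^ 2 = n / 2 := by
  have point : ∀ q : ℕ, Real.sin (((q:ℝ) + 1/2) * (π / n)) ^ 2
      = 1/2 - Real.cos ((2 * q + 1) * (π / n)) / 2 := by
    intro q
    have h2x : (2:ℝ) * (((q:ℝ) + 1/2) * (π / n)) = (2 * q + 1) * (π / n) := by ring
    rw [Real.sin_sq, Real.cos_sq, ← h2x]
    ring
  rw [Finset.sum_congr rfl fun q _ => point q, Finset.sum_sub_distrib]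
  rw [show (∑ q ∈ range n, Real.cos ((2 * (q:ℝ) + 1) * (π / n)) / 2)
      = (∑ q ∈ range n, Real.cos ((2 * (q:ℝ) + 1) * (π / n))) / 2 from (Finset.sum_div _ _ _).symm]
  rw [cos_sum_odd n hn]
  simp
  ring

lemma sum_sin_mul (n : ℕ) (hn : 2 ≤ n) :
    ∑ α ∈ range (n - 1), Real.sin (((α:ℝ) + 1/2) * (π / n)) * Real.sin (((α:ℝ) + 3/2) * (π / n))
      = (((n:ℝ) - 1) * Real.cos (π / n) + 1) / 2 := by
  have point : ∀ α : ℕ, Real.sin (((α:ℝ) + 1/2) * (π / n)) * Real.sin (((α:ℝ) + 3/2) * (π / n))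
      = (Real.cos (π / n) - Real.cos ((2 * α + 2) * (π / n))) / 2 := by
    intro α
    rw [Real.cos_sub_cos]
    have e1 : ((π / (n:ℝ)) + (2 * α + 2) * (π / n)) / 2 = ((α:ℝ) + 3/2) * (π / n) := by ring
    have e2 : ((π / (n:ℝ)) - (2 * α + 2) * (π / n)) / 2 = -(((α:ℝ) + 1/2) * (π / n)) := by ring
    rw [e1, e2, Real.sin_neg]
    ring
  have hshift : ∑ α ∈ range (n - 1), Real.cos ((2 * (α:ℝ) + 2) * (π / n)) = -1 := by
    obtain ⟨m, hm⟩ : ∃ m, n = m + 1 := ⟨n - 1, by omega⟩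
    subst hm
    simp only [Nat.add_sub_cancel]
    have h0 := cos_sum_even (m + 1) hn
    rw [Finset.sum_range_succ' (fun k => Real.cos (2 * (k:ℝ) * (π / ((m+1:ℕ):ℝ))))] at h0
    simp only [Nat.cast_zero, mul_zero, zero_mul, Real.cos_zero] at h0
    have he : ∀ α : ℕ, Real.cos (2 * ((α + 1 : ℕ):ℝ) * (π / ((m+1:ℕ):ℝ)))
        = Real.cos ((2 * (α:ℝ) + 2) * (π / ((m+1:ℕ):ℝ))) := by
      intro α; congr 1; push_cast; ring
    rw [Finset.sum_congr rfl fun α _ => he α] at h0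
    linarith
  rw [Finset.sum_congr rfl fun α _ => point α]
  rw [show (∑ α ∈ range (n-1), (Real.cos (π / n) - Real.cos ((2 * (α:ℝ) + 2) * (π / n))) / 2)
      = (∑ α ∈ range (n-1), (Real.cos (π / n) - Real.cos ((2 * (α:ℝ) + 2) * (π / n)))) / 2 from
      (Finset.sum_div _ _ _).symm]
  rw [Finset.sum_sub_distrib, hshift, Finset.sum_const, Finset.card_range]
  have hcast : ((n - 1 : ℕ) : ℝ) = (n:ℝ) - 1 := by
    have : 1 ≤ n := by omega
    push_cast [this]
    ring
  rw [nsmul_eq_mul, hcast]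
  ring


def Vm (r : ℕ) (α : Fin (r + 1)) : Matrix (Fin (2 + r)) (Fin 2) ℂ :=
  Matrix.of fun (q : Fin (2 + r)) (p : Fin 2) =>
    if (q : ℕ) = (p : ℕ) + (α : ℕ) then (1 : ℂ) else 0

def emb (r : ℕ) (α : Fin (r + 1)) (p : Fin 2) : Fin (2 + r) :=
  ⟨(p : ℕ) + (α : ℕ), by omega⟩

lemma Vm_conjT_mulVec (r : ℕ) (α : Fin (r + 1)) (w : Fin (2 + r) → ℂ) :
    (Vm r α)ᴴ *ᵥ w = fun p => w (emb r α p) := by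
  funext p
  simp only [Matrix.mulVec, dotProduct, Matrix.conjTranspose_apply, Vm, Matrix.of_apply]
  have key : ∀ q : Fin (2 + r),
      star (if (q : ℕ) = (p : ℕ) + (α : ℕ) then (1:ℂ) else 0) * w q
        = if q = emb r α p then w q else 0 := by
    intro q
    by_cases h : (q : ℕ) = (p : ℕ) + (α : ℕ)
    · rw [if_pos h, if_pos (by exact Fin.ext h)]
      simp
    · rw [if_neg h, if_neg (by intro hq; exact h (by rw [hq]; rfl))]
      simp
  rw [Finset.sum_congr rfl fun q _ => key q, Finset.sum_ite_eq' Finset.univ (emb r α p) w]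
  simp

lemma quad_conj {m n : Type*} [Fintype m] [Fintype n]
    (M : Matrix m n ℂ) (N : Matrix n n ℂ) (x : m → ℂ) :
    star x ⬝ᵥ (M * N * Mᴴ) *ᵥ x = star (Mᴴ *ᵥ x) ⬝ᵥ N *ᵥ (Mᴴ *ᵥ x) := by
  calc star x ⬝ᵥ (M * N * Mᴴ) *ᵥ x
      = star x ⬝ᵥ M *ᵥ (N *ᵥ (Mᴴ *ᵥ x)) := by
        rw [Matrix.mulVec_mulVec, Matrix.mulVec_mulVec, Matrix.mul_assoc]
    _ = (star x ᵥ* M) ⬝ᵥ (N *ᵥ (Mᴴ *ᵥ x)) := Matrix.dotProduct_mulVec _ _ _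
    _ = star (Mᴴ *ᵥ x) ⬝ᵥ N *ᵥ (Mᴴ *ᵥ x) := by
        rw [Matrix.star_mulVec, Matrix.conjTranspose_conjTranspose]

lemma sum_mulVec' {ι m n : Type*} [Fintype n] (s : Finset ι)
    (A : ι → Matrix m n ℂ) (v : n → ℂ) :
    (∑ i ∈ s, A i) *ᵥ v = ∑ i ∈ s, A i *ᵥ v := by
  ext j
  simp only [Matrix.mulVec, dotProduct, Matrix.sum_apply, Finset.sum_apply,
    Finset.sum_mul]
  exact Finset.sum_comm

lemma dotProduct_sum' {ι n : Type*} [Fintype n] (s : Finset ι)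
    (v : n → ℂ) (f : ι → n → ℂ) :
    v ⬝ᵥ (∑ i ∈ s, f i) = ∑ i ∈ s, v ⬝ᵥ f i := by
  simp only [dotProduct, Finset.sum_apply, Finset.mul_sum]
  exact Finset.sum_comm

lemma quadform (r : ℕ) (a : ℝ) (A : Matrix (Fin 2) (Fin 2) ℂ) (w : Fin (2 + r) → ℂ) :
    star w ⬝ᵥ ((a : ℂ) • Matrix.trace A • (1 : Matrix (Fin (2 + r)) (Fin (2 + r)) ℂ)
      - ∑ α : Fin (r + 1), (Vm r α * A * (Vm r α)ᴴ)) *ᵥ w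
    = (a : ℂ) * Matrix.trace A * (star w ⬝ᵥ w)
      - ∑ α : Fin (r + 1),
          (star (fun p => w (emb r α p)) ⬝ᵥ A *ᵥ (fun p => w (emb r α p))) := by
  rw [Matrix.sub_mulVec, dotProduct_sub]
  congr 1
  · rw [Matrix.smul_mulVec, Matrix.smul_mulVec, Matrix.one_mulVec]
    rw [dotProduct_smul, dotProduct_smul]
    simp [smul_eq_mul, mul_assoc]
  · rw [sum_mulVec', dotProduct_sum']
    apply Finset.sum_congr rfl
    intro α _
    rw [quad_conj, Vm_conjT_mulVec]

lemma star_dot_self (m : ℕ) (v : Fin m → ℂ) :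
    star v ⬝ᵥ v = ((∑ q : Fin m, Complex.normSq (v q) : ℝ) : ℂ) := by
  rw [Complex.ofReal_sum]
  simp only [dotProduct, Pi.star_apply]
  apply Finset.sum_congr rfl
  intro q _
  rw [← starRingEnd_apply]
  exact Complex.normSq_eq_conj_mul_self.symm

lemma key_psd (r : ℕ) (a : ℝ) (ha : 1 + Real.cos (π / (r + 2)) ≤ a)
    (A : Matrix (Fin 2) (Fin 2) ℂ) (hA : A.PosSemidef) (w : Fin (2 + r) → ℂ) :
    0 ≤ (a : ℂ) * Matrix.trace A * (star w ⬝ᵥ w)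
      - ∑ α : Fin (r + 1),
          (star (fun p => w (emb r α p)) ⬝ᵥ A *ᵥ (fun p => w (emb r α p))) := by
  obtain ⟨B, hB⟩ : ∃ B : Matrix (Fin 2) (Fin 2) ℂ, A = Bᴴ * B := by
    open scoped MatrixOrder in
    exact CStarAlgebra.nonneg_iff_eq_star_mul_self.mp (Matrix.nonneg_iff_posSemidef.mpr hA)
  set Wn : ℕ → ℂ := fun q => if h : q < 2 + r then w ⟨q, h⟩ else 0 with hWn
  set X : ℝ := ∑ q ∈ range (2 + r), Complex.normSq (Wn q) with hX
  set t : ℝ := ∑ p : Fin 2, ∑ q : Fin 2, Complex.normSq (B q p) with ht_def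
  set g : ℕ → ℝ := fun k =>
    ∑ p : Fin 2, Complex.normSq (B p 0 * Wn k + B p 1 * Wn (k + 1)) with hg
  have hWn_fin : ∀ q : Fin (2 + r), Wn (q : ℕ) = w q := by
    intro q
    rw [hWn]
    simp only [q.isLt, dif_pos]
  have hX0 : 0 ≤ X := Finset.sum_nonneg fun q _ => Complex.normSq_nonneg _
  have ht0 : 0 ≤ t := Finset.sum_nonneg fun p _ =>
    Finset.sum_nonneg fun q _ => Complex.normSq_nonneg _
  -- (1)
  have h1 : star w ⬝ᵥ w = (X : ℂ) := by
    rw [star_dot_self]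
    congr 1
    rw [hX, ← Fin.sum_univ_eq_sum_range (fun k => Complex.normSq (Wn k)) (2 + r)]
    exact Finset.sum_congr rfl fun q _ => by rw [hWn_fin q]
  -- (2)
  have h2 : Matrix.trace A = (t : ℂ) := by
    rw [hB, ht_def, Complex.ofReal_sum]
    unfold Matrix.trace
    apply Finset.sum_congr rfl
    intro p _
    rw [Complex.ofReal_sum]
    simp only [Matrix.diag_apply, Matrix.mul_apply, Matrix.conjTranspose_apply]
    apply Finset.sum_congr rfl
    intro q _
    rw [← starRingEnd_apply]
    exact Complex.normSq_eq_conj_mul_self.symm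
  -- (3)
  have hemb0 : ∀ α : Fin (r + 1), w (emb r α 0) = Wn (α : ℕ) := by
    intro α
    have he : emb r α 0 = ⟨(α : ℕ), by omega⟩ := by
      apply Fin.ext; simp [emb]
    rw [he, hWn]
    simp only [show (α:ℕ) < 2 + r by omega, dif_pos]
  have hemb1 : ∀ α : Fin (r + 1), w (emb r α 1) = Wn ((α : ℕ) + 1) := by
    intro α
    have he : emb r α 1 = ⟨(α : ℕ) + 1, by omega⟩ := by
      apply Fin.ext; simp [emb]; omega
    rw [he, hWn]
    simp only [show (α:ℕ) + 1 < 2 + r by omega, dif_pos]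
  have h3 : ∀ α : Fin (r + 1),
      (star (fun p => w (emb r α p)) ⬝ᵥ A *ᵥ (fun p => w (emb r α p)))
        = ((g (α : ℕ) : ℝ) : ℂ) := by
    intro α
    set y : Fin 2 → ℂ := fun p => w (emb r α p) with hy
    have hquad : star y ⬝ᵥ A *ᵥ y = star (B *ᵥ y) ⬝ᵥ (B *ᵥ y) := by
      rw [hB, ← Matrix.mulVec_mulVec, Matrix.dotProduct_mulVec,
        Matrix.vecMul_conjTranspose, star_star]
    rw [hquad, star_dot_self]
    congr 1
    rw [hg]
    apply Finset.sum_congr rfl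
    intro p _
    congr 1
    show (B *ᵥ y) p = B p 0 * Wn (α : ℕ) + B p 1 * Wn ((α : ℕ) + 1)
    rw [Matrix.mulVec, dotProduct, Fin.sum_univ_two]
    show B p 0 * w (emb r α 0) + B p 1 * w (emb r α 1) = _
    rw [hemb0 α, hemb1 α]
  -- (4) real bound
  have h4 : ∑ α ∈ range (r + 1), g α ≤ a * t * X := by
    have hswap : ∑ α ∈ range (r + 1), g α
        = ∑ p : Fin 2, ∑ α ∈ range (r + 1),
            Complex.normSq (B p 0 * Wn α + B p 1 * Wn (α + 1)) := by
      rw [hg]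
      exact Finset.sum_comm
    have hXr : ∑ q ∈ range (r + 2), Complex.normSq (Wn q) = X := by
      rw [hX, show 2 + r = r + 2 by omega]
    have hper : ∀ p : Fin 2,
        ∑ α ∈ range (r + 1), Complex.normSq (B p 0 * Wn α + B p 1 * Wn (α + 1))
          ≤ (1 + Real.cos (π / (r + 2))) * (Complex.normSq (B p 0) + Complex.normSq (B p 1)) * X := by
      intro p
      have := rank1 r (B p 0) (B p 1) Wn
      rwa [hXr] at this
    have hsum : ∑ p : Fin 2, (1 + Real.cos (π / (r + 2)))
          * (Complex.normSq (B p 0) + Complex.normSq (B p 1)) * X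
        = (1 + Real.cos (π / (r + 2))) * t * X := by
      rw [Fin.sum_univ_two, ht_def]
      rw [Fin.sum_univ_two, Fin.sum_univ_two, Fin.sum_univ_two]
      ring
    have hc : (1 + Real.cos (π / (r + 2))) * t * X ≤ a * t * X := by
      apply mul_le_mul_of_nonneg_right _ hX0
      exact mul_le_mul_of_nonneg_right ha ht0
    calc ∑ α ∈ range (r + 1), g α
        = ∑ p : Fin 2, ∑ α ∈ range (r + 1),
            Complex.normSq (B p 0 * Wn α + B p 1 * Wn (α + 1)) := hswap
      _ ≤ ∑ p : Fin 2, (1 + Real.cos (π / (r + 2)))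
            * (Complex.normSq (B p 0) + Complex.normSq (B p 1)) * X :=
          Finset.sum_le_sum fun p _ => hper p
      _ = (1 + Real.cos (π / (r + 2))) * t * X := hsum
      _ ≤ a * t * X := hc
  -- (5) conclude
  rw [h1, h2, Finset.sum_congr rfl fun α _ => h3 α]
  have hfin : ∑ α : Fin (r + 1), ((g (α : ℕ) : ℝ) : ℂ)
      = ((∑ α ∈ range (r + 1), g α : ℝ) : ℂ) := by
    rw [Complex.ofReal_sum, ← Fin.sum_univ_eq_sum_range (fun k => ((g k : ℝ) : ℂ)) (r + 1)]
  rw [hfin, show ((a:ℂ) * (t:ℂ) * (X:ℂ)) = (((a * t * X : ℝ)):ℂ) by push_cast; ring,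
    ← Complex.ofReal_sub]
  rw [Complex.zero_le_real]
  linarith

lemma forward_real (r : ℕ) (a : ℝ)
    (h : 0 ≤ a * 2 * (∑ q ∈ range (2 + r), Real.sin (((q:ℝ) + 1/2) * (π / (r + 2))) ^ 2)
        - ∑ α ∈ range (r + 1), (Real.sin (((α:ℝ) + 1/2) * (π / (r + 2)))
            + Real.sin (((α:ℝ) + 3/2) * (π / (r + 2)))) ^ 2) :
    1 + Real.cos (π / (r + 2)) ≤ a := by
  set θ := π / ((r:ℝ) + 2) with hθ
  have hcast : ((r + 2 : ℕ) : ℝ) = (r:ℝ) + 2 := by push_cast; ring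
  have hT : ∑ q ∈ range (2 + r), Real.sin (((q:ℝ) + 1/2) * θ) ^ 2 = ((r:ℝ) + 2) / 2 := by
    have := sum_sin_sq (r + 2) (by omega)
    rw [hcast] at this
    rw [show 2 + r = r + 2 by omega]
    exact this
  have hS1 : ∑ α ∈ range (r + 1), Real.sin (((α:ℝ) + 1/2) * θ) ^ 2
      = ((r:ℝ) + 2) / 2 - Real.sin (θ / 2) ^ 2 := by
    have hpeel := Finset.sum_range_succ (fun q => Real.sin (((q:ℝ) + 1/2) * θ) ^ 2) (r + 1)
    have hend : Real.sin ((((r + 1 : ℕ):ℝ) + 1/2) * θ) = Real.sin (θ / 2) := by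
      have harg : (((r + 1 : ℕ):ℝ) + 1/2) * θ = π - θ / 2 := by
        rw [hθ]
        have hne : (r:ℝ) + 2 ≠ 0 := by positivity
        field_simp
        push_cast; ring
      rw [harg, Real.sin_pi_sub]
    have hT' : ∑ q ∈ range (r + 2), Real.sin (((q:ℝ) + 1/2) * θ) ^ 2 = ((r:ℝ) + 2) / 2 := by
      rw [show r + 2 = 2 + r by omega]; exact hT
    rw [hpeel, hend] at hT'
    linarith
  have hS2 : ∑ α ∈ range (r + 1), Real.sin (((α:ℝ) + 3/2) * θ) ^ 2
      = ((r:ℝ) + 2) / 2 - Real.sin (θ / 2) ^ 2 := by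
    have hpt : ∀ α : ℕ, Real.sin (((α:ℝ) + 3/2) * θ) ^ 2
        = Real.sin ((((α + 1 : ℕ):ℝ) + 1/2) * θ) ^ 2 := by
      intro α; congr 2; push_cast; ring
    rw [Finset.sum_congr rfl fun α _ => hpt α]
    have hpeel := Finset.sum_range_succ' (fun q => Real.sin (((q:ℝ) + 1/2) * θ) ^ 2) (r + 1)
    have hT' : ∑ q ∈ range (r + 2), Real.sin (((q:ℝ) + 1/2) * θ) ^ 2 = ((r:ℝ) + 2) / 2 := by
      rw [show r + 2 = 2 + r by omega]; exact hT
    rw [hpeel] at hT'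
    have h0 : Real.sin ((((0:ℕ):ℝ) + 1/2) * θ) ^ 2 = Real.sin (θ / 2) ^ 2 := by
      norm_num
      congr 2
      ring
    simp only [Nat.cast_zero] at hT'
    have h0' : Real.sin (((0:ℝ) + 1/2) * θ) ^ 2 = Real.sin (θ / 2) ^ 2 := by
      congr 2; ring
    rw [h0'] at hT'
    linarith
  have hS3 : ∑ α ∈ range (r + 1), Real.sin (((α:ℝ) + 1/2) * θ) * Real.sin (((α:ℝ) + 3/2) * θ)
      = (((r:ℝ) + 1) * Real.cos θ + 1) / 2 := by
    have := sum_sin_mul (r + 2) (by omega)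
    rw [hcast] at this
    rw [show r + 2 - 1 = r + 1 by omega] at this
    rw [this]
    ring
  have hhalf : Real.sin (θ / 2) ^ 2 = 1/2 - Real.cos θ / 2 := by
    rw [Real.sin_sq_eq_half_sub]
    congr 2
    ring
  have hexp : ∑ α ∈ range (r + 1), (Real.sin (((α:ℝ) + 1/2) * θ)
      + Real.sin (((α:ℝ) + 3/2) * θ)) ^ 2
      = ((r:ℝ) + 2) * (1 + Real.cos θ) := by
    have hpt : ∀ α : ℕ, (Real.sin (((α:ℝ) + 1/2) * θ) + Real.sin (((α:ℝ) + 3/2) * θ)) ^ 2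
        = Real.sin (((α:ℝ) + 1/2) * θ) ^ 2 + Real.sin (((α:ℝ) + 3/2) * θ) ^ 2
          + 2 * (Real.sin (((α:ℝ) + 1/2) * θ) * Real.sin (((α:ℝ) + 3/2) * θ)) := by
      intro α; ring
    rw [Finset.sum_congr rfl fun α _ => hpt α, Finset.sum_add_distrib, Finset.sum_add_distrib,
      ← Finset.mul_sum, hS1, hS2, hS3, hhalf]
    ring
  rw [hT, hexp] at h
  have hpos : (0:ℝ) < (r:ℝ) + 2 := by positivity
  nlinarith


theorem stmt_17 (r : ℕ) (a : ℝ)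
    (Φ : Matrix (Fin 2) (Fin 2) ℂ → Matrix (Fin (2 + r)) (Fin (2 + r)) ℂ)
    (hΦ : ∀ X, Φ X = (a : ℂ) • Matrix.trace X • (1 : Matrix (Fin (2 + r)) (Fin (2 + r)) ℂ)
      - ∑ α : Fin (r + 1),
          ((Matrix.of fun (q : Fin (2 + r)) (p : Fin 2) =>
              if (q : ℕ) = (p : ℕ) + (α : ℕ) then (1 : ℂ) else 0) * X *
            (Matrix.of fun (q : Fin (2 + r)) (p : Fin 2) =>
              if (q : ℕ) = (p : ℕ) + (α : ℕ) then (1 : ℂ) else 0)ᴴ)) :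
    (∀ A : Matrix (Fin 2) (Fin 2) ℂ, A.PosSemidef → (Φ A).PosSemidef) ↔
      1 + Real.cos (Real.pi / (r + 2)) ≤ a := by
  have hΦ' : ∀ X, Φ X = (a : ℂ) • Matrix.trace X • (1 : Matrix (Fin (2 + r)) (Fin (2 + r)) ℂ)
      - ∑ α : Fin (r + 1), (Vm r α * X * (Vm r α)ᴴ) := hΦ
  constructor
  · -- positivity implies the bound on a
    intro h
    set θ := π / ((r:ℝ) + 2) with hθ
    set A1 : Matrix (Fin 2) (Fin 2) ℂ := Matrix.of ![![1, 1], ![1, 1]] with hA1def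
    have hA1 : A1.PosSemidef := by
      refine Matrix.PosSemidef.of_dotProduct_mulVec_nonneg ?_ ?_
      · ext i j
        fin_cases i <;> fin_cases j <;>
          simp [hA1def, Matrix.conjTranspose_apply]
      · intro x
        have hv : (A1 *ᵥ x) 0 = x 0 + x 1 ∧ (A1 *ᵥ x) 1 = x 0 + x 1 := by
          constructor <;>
            simp [hA1def, Matrix.mulVec, dotProduct, Fin.sum_univ_two]
        have hform : star x ⬝ᵥ A1 *ᵥ x = ((Complex.normSq (x 0 + x 1) : ℝ) : ℂ) := by
          rw [dotProduct, Fin.sum_univ_two, Pi.star_apply, Pi.star_apply,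
            hv.1, hv.2]
          have : star (x 0) * (x 0 + x 1) + star (x 1) * (x 0 + x 1)
              = (starRingEnd ℂ) (x 0 + x 1) * (x 0 + x 1) := by
            rw [starRingEnd_apply, star_add]; ring
          rw [this]
          exact Complex.normSq_eq_conj_mul_self.symm
        rw [hform]
        exact Complex.zero_le_real.mpr (Complex.normSq_nonneg _)
    set wv : Fin (2 + r) → ℂ := fun q => ((Real.sin ((((q:ℕ):ℝ) + 1/2) * θ) : ℝ) : ℂ) with hwv
    have h2 := (h A1 hA1).dotProduct_mulVec_nonneg wv
    rw [hΦ' A1, quadform] at h2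
    have htr : Matrix.trace A1 = 2 := by
      simp [hA1def, Matrix.trace, Fin.sum_univ_two]
      norm_num
    have hdot : star wv ⬝ᵥ wv
        = ((∑ q ∈ range (2 + r), Real.sin (((q:ℝ) + 1/2) * θ) ^ 2 : ℝ) : ℂ) := by
      rw [star_dot_self]
      congr 1
      rw [← Fin.sum_univ_eq_sum_range (fun k => Real.sin (((k:ℝ) + 1/2) * θ) ^ 2) (2 + r)]
      apply Finset.sum_congr rfl
      intro q _
      rw [hwv]
      rw [Complex.normSq_ofReal, sq]
    have hy : ∀ α : Fin (r + 1),
        (star (fun p => wv (emb r α p)) ⬝ᵥ A1 *ᵥ (fun p => wv (emb r α p)))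
        = (((Real.sin (((α:ℝ) + 1/2) * θ) + Real.sin (((α:ℝ) + 3/2) * θ)) ^ 2 : ℝ) : ℂ) := by
      intro α
      set y : Fin 2 → ℂ := fun p => wv (emb r α p) with hy0
      have hv : (A1 *ᵥ y) 0 = y 0 + y 1 ∧ (A1 *ᵥ y) 1 = y 0 + y 1 := by
        constructor <;>
          simp [hA1def, Matrix.mulVec, dotProduct, Fin.sum_univ_two]
      have hform : star y ⬝ᵥ A1 *ᵥ y = ((Complex.normSq (y 0 + y 1) : ℝ) : ℂ) := by
        rw [dotProduct, Fin.sum_univ_two, Pi.star_apply, Pi.star_apply, hv.1, hv.2]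
        have : star (y 0) * (y 0 + y 1) + star (y 1) * (y 0 + y 1)
            = (starRingEnd ℂ) (y 0 + y 1) * (y 0 + y 1) := by
          rw [starRingEnd_apply, star_add]; ring
        rw [this]
        exact Complex.normSq_eq_conj_mul_self.symm
      have hy0' : y 0 = ((Real.sin (((α:ℝ) + 1/2) * θ) : ℝ) : ℂ) := by
        show Complex.ofReal (Real.sin (((((emb r α 0 : Fin (2+r)) : ℕ) : ℝ) + 1/2) * θ)) = _
        have he : ((emb r α 0 : Fin (2+r)) : ℕ) = (α:ℕ) := by simp [emb]
        rw [he]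
      have hy1' : y 1 = ((Real.sin (((α:ℝ) + 3/2) * θ) : ℝ) : ℂ) := by
        show Complex.ofReal (Real.sin (((((emb r α 1 : Fin (2+r)) : ℕ) : ℝ) + 1/2) * θ)) = _
        have he : ((emb r α 1 : Fin (2+r)) : ℕ) = (α:ℕ) + 1 := by simp [emb]; omega
        rw [he]
        have harg : (((α:ℕ) + 1 : ℕ):ℝ) + 1/2 = (α:ℝ) + 3/2 := by push_cast; ring
        rw [harg]
      rw [hform, hy0', hy1', ← Complex.ofReal_add, Complex.normSq_ofReal, sq]
    rw [htr, hdot, Finset.sum_congr rfl fun α (_ : α ∈ Finset.univ) => hy α] at h2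
    have hfs : ∑ α : Fin (r + 1),
        (((Real.sin (((α:ℝ) + 1/2) * θ) + Real.sin (((α:ℝ) + 3/2) * θ)) ^ 2 : ℝ) : ℂ)
        = ((∑ α ∈ range (r + 1),
            (Real.sin (((α:ℝ) + 1/2) * θ) + Real.sin (((α:ℝ) + 3/2) * θ)) ^ 2 : ℝ) : ℂ) := by
      rw [Complex.ofReal_sum,
        ← Fin.sum_univ_eq_sum_range
          (fun k => (((Real.sin (((k:ℝ) + 1/2) * θ) + Real.sin (((k:ℝ) + 3/2) * θ)) ^ 2 : ℝ) : ℂ))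
          (r + 1)]
    rw [hfs] at h2
    have hcombine : (a:ℂ) * 2
          * ((∑ q ∈ range (2 + r), Real.sin (((q:ℝ) + 1/2) * θ) ^ 2 : ℝ) : ℂ)
        - ((∑ α ∈ range (r + 1),
            (Real.sin (((α:ℝ) + 1/2) * θ) + Real.sin (((α:ℝ) + 3/2) * θ)) ^ 2 : ℝ) : ℂ)
        = (((a * 2 * (∑ q ∈ range (2 + r), Real.sin (((q:ℝ) + 1/2) * θ) ^ 2)
            - ∑ α ∈ range (r + 1),
              (Real.sin (((α:ℝ) + 1/2) * θ) + Real.sin (((α:ℝ) + 3/2) * θ)) ^ 2 : ℝ)) : ℂ) := by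
      push_cast
      ring
    rw [hcombine, Complex.zero_le_real] at h2
    exact forward_real r a h2
  · -- the bound on a implies positivity
    intro ha A hA
    refine Matrix.PosSemidef.of_dotProduct_mulVec_nonneg ?_ ?_
    · rw [hΦ']
      have htr : star (Matrix.trace A) = Matrix.trace A := by
        rw [← Matrix.trace_conjTranspose, hA.1]
      unfold Matrix.IsHermitian
      rw [Matrix.conjTranspose_sub, Matrix.conjTranspose_smul, Matrix.conjTranspose_smul,
        Matrix.conjTranspose_one, Matrix.conjTranspose_sum]
      congr 1
      · rw [htr]
        congr 1
        simp [Complex.star_def, Complex.conj_ofReal]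
      · apply Finset.sum_congr rfl
        intro α _
        rw [Matrix.conjTranspose_mul, Matrix.conjTranspose_mul,
          Matrix.conjTranspose_conjTranspose, hA.1, Matrix.mul_assoc]
    · intro x
      rw [hΦ' A, quadform]
      exact key_psd r a ha A hA x
end

section
/- Consider the real polynomial in the variables x = (x₁,x₂,x₃,x₄) ∈ ℝ⁴ and y = (y₁,y₂,y₃,y₄) ∈ ℝ⁴ given by p(x,y) = (2x₁² + x₄²)y₁² + (2x₂² + x₁²)y₂² + (2x₃² + x₂²)y₃² + (2x₄² + x₃²)y₄² − 2·∑_{1 ≤ i < j ≤ 4} x_i x_j y_i y_j. Then p is not a finite sum of squares of real bilinear forms: there is no finite family of real 4×4 matrices A_1, …, A_L such that p(x,y) = ∑_{r=1}^{L} (xᵗ A_r y)² for all x, y ∈ ℝ⁴. -/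
lemma aux_sum_sq_zero {L : ℕ} {f : Fin L → ℝ} (h : ∑ r, f r ^ 2 = 0) (r : Fin L) : f r = 0 := by
  have := (Finset.sum_eq_zero_iff_of_nonneg (fun i _ => sq_nonneg (f i))).mp h r (Finset.mem_univ r)
  exact pow_eq_zero_iff (by norm_num) |>.mp this

lemma aux_prod {L : ℕ} {f g : Fin L → ℝ} {a b : ℝ}
    (h1 : ∑ r, (f r + g r) ^ 2 = a) (h2 : ∑ r, (f r - g r) ^ 2 = b) :
    ∑ r, f r * g r = (a - b) / 4 := by
  have key : ∑ r, (f r + g r) ^ 2 - ∑ r, (f r - g r) ^ 2 = 4 * ∑ r, f r * g r := by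
    rw [← Finset.sum_sub_distrib, Finset.mul_sum]
    exact Finset.sum_congr rfl fun r _ => by ring
  rw [h1, h2] at key; linarith

lemma aux_split {L : ℕ} (f g k : Fin L → ℝ) :
    ∑ r, f r * (g r + k r) = ∑ r, f r * g r + ∑ r, f r * k r := by
  rw [← Finset.sum_add_distrib]; exact Finset.sum_congr rfl fun r _ => by ring

theorem stmt_19 :
    ¬ ∃ (L : ℕ) (A : Fin L → Matrix (Fin 4) (Fin 4) ℝ),
      ∀ x y : Fin 4 → ℝ,
        (2 * x 0 ^ 2 + x 3 ^ 2) * y 0 ^ 2 + (2 * x 1 ^ 2 + x 0 ^ 2) * y 1 ^ 2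
          + (2 * x 2 ^ 2 + x 1 ^ 2) * y 2 ^ 2 + (2 * x 3 ^ 2 + x 2 ^ 2) * y 3 ^ 2
          - 2 * (x 0 * x 1 * y 0 * y 1 + x 0 * x 2 * y 0 * y 2 + x 0 * x 3 * y 0 * y 3
              + x 1 * x 2 * y 1 * y 2 + x 1 * x 3 * y 1 * y 3 + x 2 * x 3 * y 2 * y 3)
        = ∑ r : Fin L, (∑ i : Fin 4, ∑ j : Fin 4, x i * A r i j * y j) ^ 2 := by
  rintro ⟨L, A, h⟩
  -- diagonal norms : ∑ (A r i i)^2 = 2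
  have d0 : ∑ r, (A r 0 0) ^ 2 = 2 := by
    have H := h ![1,0,0,0] ![1,0,0,0]; norm_num [Fin.sum_univ_four, Matrix.cons_val_two, Matrix.cons_val_three] at H; linarith [H]
  have d1 : ∑ r, (A r 1 1) ^ 2 = 2 := by
    have H := h ![0,1,0,0] ![0,1,0,0]; norm_num [Fin.sum_univ_four, Matrix.cons_val_two, Matrix.cons_val_three] at H; linarith [H]
  have d2 : ∑ r, (A r 2 2) ^ 2 = 2 := by
    have H := h ![0,0,1,0] ![0,0,1,0]; norm_num [Fin.sum_univ_four, Matrix.cons_val_two, Matrix.cons_val_three] at H; linarith [H]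
  have d3 : ∑ r, (A r 3 3) ^ 2 = 2 := by
    have H := h ![0,0,0,1] ![0,0,0,1]; norm_num [Fin.sum_univ_four, Matrix.cons_val_two, Matrix.cons_val_three] at H; linarith [H]
  -- zero entries
  have z02 : ∀ r, A r 0 2 = 0 := by
    have H := h ![1,0,0,0] ![0,0,1,0]; norm_num [Fin.sum_univ_four, Matrix.cons_val_two, Matrix.cons_val_three] at H
    exact aux_sum_sq_zero H.symm
  have z03 : ∀ r, A r 0 3 = 0 := by
    have H := h ![1,0,0,0] ![0,0,0,1]; norm_num [Fin.sum_univ_four, Matrix.cons_val_two, Matrix.cons_val_three] at H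
    exact aux_sum_sq_zero H.symm
  have z10 : ∀ r, A r 1 0 = 0 := by
    have H := h ![0,1,0,0] ![1,0,0,0]; norm_num [Fin.sum_univ_four, Matrix.cons_val_two, Matrix.cons_val_three] at H
    exact aux_sum_sq_zero H.symm
  have z13 : ∀ r, A r 1 3 = 0 := by
    have H := h ![0,1,0,0] ![0,0,0,1]; norm_num [Fin.sum_univ_four, Matrix.cons_val_two, Matrix.cons_val_three] at H
    exact aux_sum_sq_zero H.symm
  have z20 : ∀ r, A r 2 0 = 0 := by
    have H := h ![0,0,1,0] ![1,0,0,0]; norm_num [Fin.sum_univ_four, Matrix.cons_val_two, Matrix.cons_val_three] at H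
    exact aux_sum_sq_zero H.symm
  have z21 : ∀ r, A r 2 1 = 0 := by
    have H := h ![0,0,1,0] ![0,1,0,0]; norm_num [Fin.sum_univ_four, Matrix.cons_val_two, Matrix.cons_val_three] at H
    exact aux_sum_sq_zero H.symm
  have z31 : ∀ r, A r 3 1 = 0 := by
    have H := h ![0,0,0,1] ![0,1,0,0]; norm_num [Fin.sum_univ_four, Matrix.cons_val_two, Matrix.cons_val_three] at H
    exact aux_sum_sq_zero H.symm
  have z32 : ∀ r, A r 3 2 = 0 := by
    have H := h ![0,0,0,1] ![0,0,1,0]; norm_num [Fin.sum_univ_four, Matrix.cons_val_two, Matrix.cons_val_three] at H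
    exact aux_sum_sq_zero H.symm
  -- pair (0,1)
  have p01 : ∑ r, A r 0 0 * A r 1 1 = -1 := by
    have e1 : ∑ r, (A r 0 0 + (A r 0 1 + A r 1 1)) ^ 2 = 3 := by
      have H := h ![1,1,0,0] ![1,1,0,0]; norm_num [Fin.sum_univ_four, Matrix.cons_val_two, Matrix.cons_val_three] at H
      rw [H]; exact Finset.sum_congr rfl fun r _ => by rw [z10 r]; ring
    have e2 : ∑ r, (A r 0 0 - (A r 0 1 + A r 1 1)) ^ 2 = 7 := by
      have H := h ![1,1,0,0] ![1,-1,0,0]; norm_num [Fin.sum_univ_four, Matrix.cons_val_two, Matrix.cons_val_three] at H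
      rw [H]; exact Finset.sum_congr rfl fun r _ => by rw [z10 r]; ring
    have e3 : ∑ r, (A r 0 0 + A r 0 1) ^ 2 = 3 := by
      have H := h ![1,0,0,0] ![1,1,0,0]; norm_num [Fin.sum_univ_four, Matrix.cons_val_two, Matrix.cons_val_three] at H
      rw [H]
    have e4 : ∑ r, (A r 0 0 - A r 0 1) ^ 2 = 3 := by
      have H := h ![1,0,0,0] ![1,-1,0,0]; norm_num [Fin.sum_univ_four, Matrix.cons_val_two, Matrix.cons_val_three] at H
      rw [H]; exact Finset.sum_congr rfl fun r _ => by ring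
    have q1 := aux_prod e1 e2
    have q2 := aux_prod e3 e4
    have q3 := aux_split (fun r => A r 0 0) (fun r => A r 0 1) (fun r => A r 1 1)
    rw [q3] at q1; rw [q2] at q1; linarith
  -- pair (1,2)
  have p12 : ∑ r, A r 1 1 * A r 2 2 = -1 := by
    have e1 : ∑ r, (A r 1 1 + (A r 1 2 + A r 2 2)) ^ 2 = 3 := by
      have H := h ![0,1,1,0] ![0,1,1,0]; norm_num [Fin.sum_univ_four, Matrix.cons_val_two, Matrix.cons_val_three] at H
      rw [H]; exact Finset.sum_congr rfl fun r _ => by rw [z21 r]; ring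
    have e2 : ∑ r, (A r 1 1 - (A r 1 2 + A r 2 2)) ^ 2 = 7 := by
      have H := h ![0,1,1,0] ![0,1,-1,0]; norm_num [Fin.sum_univ_four, Matrix.cons_val_two, Matrix.cons_val_three] at H
      rw [H]; exact Finset.sum_congr rfl fun r _ => by rw [z21 r]; ring
    have e3 : ∑ r, (A r 1 1 + A r 1 2) ^ 2 = 3 := by
      have H := h ![0,1,0,0] ![0,1,1,0]; norm_num [Fin.sum_univ_four, Matrix.cons_val_two, Matrix.cons_val_three] at H
      rw [H]
    have e4 : ∑ r, (A r 1 1 - A r 1 2) ^ 2 = 3 := by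
      have H := h ![0,1,0,0] ![0,1,-1,0]; norm_num [Fin.sum_univ_four, Matrix.cons_val_two, Matrix.cons_val_three] at H
      rw [H]; exact Finset.sum_congr rfl fun r _ => by ring
    have q1 := aux_prod e1 e2
    have q2 := aux_prod e3 e4
    have q3 := aux_split (fun r => A r 1 1) (fun r => A r 1 2) (fun r => A r 2 2)
    rw [q3] at q1; rw [q2] at q1; linarith
  -- pair (2,3)
  have p23 : ∑ r, A r 2 2 * A r 3 3 = -1 := by
    have e1 : ∑ r, (A r 2 2 + (A r 2 3 + A r 3 3)) ^ 2 = 3 := by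
      have H := h ![0,0,1,1] ![0,0,1,1]; norm_num [Fin.sum_univ_four, Matrix.cons_val_two, Matrix.cons_val_three] at H
      rw [H]; exact Finset.sum_congr rfl fun r _ => by rw [z32 r]; ring
    have e2 : ∑ r, (A r 2 2 - (A r 2 3 + A r 3 3)) ^ 2 = 7 := by
      have H := h ![0,0,1,1] ![0,0,1,-1]; norm_num [Fin.sum_univ_four, Matrix.cons_val_two, Matrix.cons_val_three] at H
      rw [H]; exact Finset.sum_congr rfl fun r _ => by rw [z32 r]; ring
    have e3 : ∑ r, (A r 2 2 + A r 2 3) ^ 2 = 3 := by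
      have H := h ![0,0,1,0] ![0,0,1,1]; norm_num [Fin.sum_univ_four, Matrix.cons_val_two, Matrix.cons_val_three] at H
      rw [H]
    have e4 : ∑ r, (A r 2 2 - A r 2 3) ^ 2 = 3 := by
      have H := h ![0,0,1,0] ![0,0,1,-1]; norm_num [Fin.sum_univ_four, Matrix.cons_val_two, Matrix.cons_val_three] at H
      rw [H]; exact Finset.sum_congr rfl fun r _ => by ring
    have q1 := aux_prod e1 e2
    have q2 := aux_prod e3 e4
    have q3 := aux_split (fun r => A r 2 2) (fun r => A r 2 3) (fun r => A r 3 3)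
    rw [q3] at q1; rw [q2] at q1; linarith
  -- pair (0,3)
  have p03 : ∑ r, A r 0 0 * A r 3 3 = -1 := by
    have e1 : ∑ r, ((A r 0 0 + A r 3 0) + A r 3 3) ^ 2 = 3 := by
      have H := h ![1,0,0,1] ![1,0,0,1]; norm_num [Fin.sum_univ_four, Matrix.cons_val_two, Matrix.cons_val_three] at H
      rw [H]; exact Finset.sum_congr rfl fun r _ => by rw [z03 r]; ring
    have e2 : ∑ r, ((A r 0 0 + A r 3 0) - A r 3 3) ^ 2 = 7 := by
      have H := h ![1,0,0,1] ![1,0,0,-1]; norm_num [Fin.sum_univ_four, Matrix.cons_val_two, Matrix.cons_val_three] at H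
      rw [H]; exact Finset.sum_congr rfl fun r _ => by rw [z03 r]; ring
    have e3 : ∑ r, (A r 3 0 + A r 3 3) ^ 2 = 3 := by
      have H := h ![0,0,0,1] ![1,0,0,1]; norm_num [Fin.sum_univ_four, Matrix.cons_val_two, Matrix.cons_val_three] at H
      rw [H]
    have e4 : ∑ r, (A r 3 0 - A r 3 3) ^ 2 = 3 := by
      have H := h ![0,0,0,1] ![1,0,0,-1]; norm_num [Fin.sum_univ_four, Matrix.cons_val_two, Matrix.cons_val_three] at H
      rw [H]; exact Finset.sum_congr rfl fun r _ => by ring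
    have q1 := aux_prod e1 e2
    have q2 := aux_prod e3 e4
    have q3 := aux_split (fun r => A r 3 3) (fun r => A r 0 0) (fun r => A r 3 0)
    have q1' : ∑ r, A r 3 3 * (A r 0 0 + A r 3 0) = -1 := by
      rw [show (-1 : ℝ) = (3 - 7)/4 by norm_num, ← q1]
      exact Finset.sum_congr rfl fun r _ => by ring
    have q2' : ∑ r, A r 3 3 * A r 3 0 = 0 := by
      rw [show (0 : ℝ) = (3 - 3)/4 by norm_num, ← q2]
      exact Finset.sum_congr rfl fun r _ => by ring
    rw [q3] at q1'
    have : ∑ r, A r 3 3 * A r 0 0 = -1 := by linarith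
    rw [← this]; exact Finset.sum_congr rfl fun r _ => by ring
  -- pair (0,2)
  have p02 : ∑ r, A r 0 0 * A r 2 2 = -1 := by
    have e1 : ∑ r, (A r 0 0 + A r 2 2) ^ 2 = 2 := by
      have H := h ![1,0,1,0] ![1,0,1,0]; norm_num [Fin.sum_univ_four, Matrix.cons_val_two, Matrix.cons_val_three] at H
      rw [H]; exact Finset.sum_congr rfl fun r _ => by rw [z02 r, z20 r]; ring
    have e2 : ∑ r, (A r 0 0 - A r 2 2) ^ 2 = 6 := by
      have H := h ![1,0,1,0] ![1,0,-1,0]; norm_num [Fin.sum_univ_four, Matrix.cons_val_two, Matrix.cons_val_three] at H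
      rw [H]; exact Finset.sum_congr rfl fun r _ => by rw [z02 r, z20 r]; ring
    have := aux_prod e1 e2; linarith [this]
  -- pair (1,3)
  have p13 : ∑ r, A r 1 1 * A r 3 3 = -1 := by
    have e1 : ∑ r, (A r 1 1 + A r 3 3) ^ 2 = 2 := by
      have H := h ![0,1,0,1] ![0,1,0,1]; norm_num [Fin.sum_univ_four, Matrix.cons_val_two, Matrix.cons_val_three] at H
      rw [H]; exact Finset.sum_congr rfl fun r _ => by rw [z13 r, z31 r]; ring
    have e2 : ∑ r, (A r 1 1 - A r 3 3) ^ 2 = 6 := by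
      have H := h ![0,1,0,1] ![0,1,0,-1]; norm_num [Fin.sum_univ_four, Matrix.cons_val_two, Matrix.cons_val_three] at H
      rw [H]; exact Finset.sum_congr rfl fun r _ => by rw [z13 r, z31 r]; ring
    have := aux_prod e1 e2; linarith [this]
  -- final contradiction
  have expand : ∑ r, (A r 0 0 + A r 1 1 + A r 2 2 + A r 3 3) ^ 2
      = ∑ r, ((A r 0 0)^2 + (A r 1 1)^2 + (A r 2 2)^2 + (A r 3 3)^2
          + 2 * (A r 0 0 * A r 1 1) + 2 * (A r 0 0 * A r 2 2) + 2 * (A r 0 0 * A r 3 3)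
          + 2 * (A r 1 1 * A r 2 2) + 2 * (A r 1 1 * A r 3 3) + 2 * (A r 2 2 * A r 3 3)) :=
    Finset.sum_congr rfl fun r _ => by ring
  simp only [Finset.sum_add_distrib, ← Finset.mul_sum] at expand
  rw [d0, d1, d2, d3, p01, p02, p03, p12, p13, p23] at expand
  have hn : (0:ℝ) ≤ ∑ r, (A r 0 0 + A r 1 1 + A r 2 2 + A r 3 3) ^ 2 :=
    Finset.sum_nonneg fun r _ => sq_nonneg _
  rw [expand] at hn; norm_num at hn
end
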